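/- arXiv:2303.07350 — 3 statements merged into one kernel-verified Lean document; each statement's English description precedes it below -/
import Mathlib

section
/- Let n ≥ 2, K ∈ ℕ and p ∈ ℤ. Assume κ^{2m} ≠ 1 for all integers m ≥ 1, and assume the genericity conditions: σ_i²/σ_j² ∉ {q^m : m ∈ ℤ} for 2 ≤ i < j ≤ n, and σ_j²/τ_a² ∉ {q^m : m ∈ ℤ} for all j ≥ 2 and all a (with q = κ²). Then the total residue of the sum ∑_{k ∈ ℕ^n, |k|=K} X_k at u_1 = q^p u_2 vanishes: the function σ_1 ↦ (σ_1 − κ^p σ_2) · ∑_{k ∈ ℕ^n, |k|=K} X_k((σ_1,σ_2,…,σ_n);τ) tends to 0 as σ_1 tends to κ^p σ_2 within ℂ∖{κ^p σ_2}. In other words, the left-hand side of the duality identity has no poles along the diagonals u_1 = q^p u_2. -/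
open Filter Topology

/-- The symmetric q-Pochhammer bracket
`⟨ζ⟩_m = ∏_{l=0}^{m-1} (κ^l ζ − κ^{−l} ζ⁻¹)`, representing `[ζ²; κ²]_m`. -/
noncomputable def br (κ ζ : ℂ) (m : ℕ) : ℂ :=
  ∏ l ∈ Finset.range m, (κ ^ l * ζ - κ ^ (-(l : ℤ)) * ζ⁻¹)

/-- The summand `X_k(σ;τ)` of the left-hand side of the duality identity,
written in terms of the square roots `σ_i` of `u_i`, `τ_a` of `v_a`,
`κ` of `q` and `ρ` of `t`. -/
noncomputable def Xsum (κ ρ : ℂ) {n : ℕ} (k : Fin n → ℕ) (σ τ : Fin n → ℂ) : ℂ :=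
  (∏ i, br κ (κ * ρ) (k i) / br κ κ (k i)) *
  (∏ i, ∏ j ∈ Finset.univ.filter (fun j => j ≠ i),
      br κ (ρ⁻¹ * κ ^ (-(k j : ℤ)) * (σ i / σ j)) (k i) /
        br κ (κ ^ (-(k j : ℤ)) * (σ i / σ j)) (k i)) *
  (∏ a, ∏ j, br κ (ρ * σ j / τ a) (k j) / br κ (σ j / τ a) (k j))

/-- The summand `Y_k(σ;τ)` of the right-hand side of the duality identity. -/
noncomputable def Ysum (κ ρ : ℂ) {n : ℕ} (k : Fin n → ℕ) (σ τ : Fin n → ℂ) : ℂ :=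
  (∏ a, br κ (κ * ρ) (k a) / br κ κ (k a)) *
  (∏ a, ∏ b ∈ Finset.univ.filter (fun b => b ≠ a),
      br κ (ρ⁻¹ * κ ^ (-(k a : ℤ)) * (τ a / τ b)) (k b) /
        br κ (κ ^ (-(k a : ℤ)) * (τ a / τ b)) (k b)) *
  (∏ a, ∏ j, br κ (ρ * σ j / τ a) (k a) / br κ (σ j / τ a) (k a))


namespace NP
noncomputable def Ee (κ w : ℂ) (l : ℤ) : ℂ := κ ^ l * w - κ ^ (-l) * w⁻¹
noncomputable def Qp (κ w : ℂ) (s t : ℤ) : ℂ := ∏ l ∈ Finset.Ico s t, Ee κ w l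

variable {κ w : ℂ}

lemma Ee_neg (l : ℤ) : Ee κ w (-l) = -Ee κ w⁻¹ l := by
  simp only [Ee, inv_inv, neg_neg]; ring

lemma Ee_shift (hκ0 : κ ≠ 0) (s l : ℤ) : Ee κ (κ ^ s * w) l = Ee κ w (s + l) := by
  simp only [Ee, mul_inv, ← zpow_neg]
  rw [show κ ^ l * (κ ^ s * w) = (κ ^ l * κ ^ s) * w by ring,
      show κ ^ (-l) * (κ ^ (-s) * w⁻¹) = (κ ^ (-l) * κ ^ (-s)) * w⁻¹ by ring,
      ← zpow_add₀ hκ0, ← zpow_add₀ hκ0,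
      show l + s = s + l from add_comm l s, show -l + -s = -(s + l) by ring]

lemma br_eq (κ ζ : ℂ) (M : ℕ) : br κ ζ M = ∏ l ∈ Finset.range M, Ee κ ζ (l : ℤ) := by
  unfold br Ee
  exact Finset.prod_congr rfl fun l _ => by rw [zpow_natCast]

lemma Ico_int_insert_top {a b : ℤ} (h : a ≤ b) :
    Finset.Ico a (b + 1) = insert b (Finset.Ico a b) := by
  ext l
  simp only [Finset.mem_Ico, Finset.mem_insert]
  omega

lemma Qp_succ_top {a b : ℤ} (h : a ≤ b) (κ w : ℂ) :
    Qp κ w a (b + 1) = Qp κ w a b * Ee κ w b := by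
  rw [Qp, Ico_int_insert_top h, Finset.prod_insert (by simp), Qp]
  ring

lemma prod_range_Ee (κ w : ℂ) (s : ℤ) (M : ℕ) :
    ∏ l ∈ Finset.range M, Ee κ w (s + l) = Qp κ w s (s + M) := by
  induction M with
  | zero => simp [Qp]
  | succ M ih =>
    rw [Finset.prod_range_succ, ih, Qp, Qp]
    push_cast
    rw [← Qp, ← Qp, show s + ((M : ℤ) + 1) = (s + M) + 1 by ring,
      Qp_succ_top (show s ≤ s + (M : ℤ) by omega)]

lemma br_eq_Q (hκ0 : κ ≠ 0) (s : ℤ) (w : ℂ) (M : ℕ) :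
    br κ (κ ^ s * w) M = Qp κ w s (s + M) := by
  rw [br_eq, ← prod_range_Ee]
  exact Finset.prod_congr rfl fun l _ => Ee_shift hκ0 s l

lemma Qp_split {s m t : ℤ} (h1 : s ≤ m) (h2 : m ≤ t) (κ w : ℂ) :
    Qp κ w s m * Qp κ w m t = Qp κ w s t := by
  rw [Qp, Qp, Qp, ← Finset.prod_union (Finset.Ico_disjoint_Ico_consecutive s m t),
    Finset.Ico_union_Ico_eq_Ico h1 h2]

lemma Qp_swap {x y u v : ℤ} (hxv : x ≤ v) (huv : u ≤ v) (hvy : v ≤ y) (κ w : ℂ) :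
    Qp κ w x y * Qp κ w u v = Qp κ w x v * Qp κ w u y := by
  rcases le_total u x with h | h
  · rw [← Qp_split hxv hvy κ w, ← Qp_split (h.trans hxv) hvy κ w (m := v) (s := u)]
    ring
  · rw [← Qp_split h (huv.trans hvy) κ w (m := u) (t := y),
      ← Qp_split h huv κ w (m := u) (t := v)]
    ring

lemma Ico_int_insert_bot {a b : ℤ} (h : a < b) :
    Finset.Ico a b = insert a (Finset.Ico (a + 1) b) := by
  ext l
  simp only [Finset.mem_Ico, Finset.mem_insert]
  omega

lemma Qp_reflect (κ w : ℂ) (M : ℕ) : Qp κ w 1 (1 + M) = (-1) ^ M * Qp κ w⁻¹ (-M) 0 := by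
  induction M with
  | zero => simp [Qp]
  | succ M ih =>
    have h1 : Qp κ w 1 (1 + (M + 1 : ℕ)) = Qp κ w 1 (1 + M) * Ee κ w (1 + M) := by
      push_cast
      rw [show (1 : ℤ) + ((M : ℤ) + 1) = (1 + M) + 1 by ring,
        Qp_succ_top (show (1:ℤ) ≤ 1 + (M:ℤ) by omega)]
    have h2 : Qp κ w⁻¹ (-(M + 1 : ℕ)) 0 = Ee κ w⁻¹ (-(1 + M)) * Qp κ w⁻¹ (-M) 0 := by
      rw [Qp, Ico_int_insert_bot (by push_cast; omega), Finset.prod_insert (by simp),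
        show (-(M + 1 : ℕ) : ℤ) + 1 = -M by push_cast; ring, Qp,
        show (-(M + 1 : ℕ) : ℤ) = -(1 + M) by push_cast; ring]
    have h3 : Ee κ w⁻¹ (-(1 + M)) = -Ee κ w (1 + M) := by
      rw [Ee_neg, inv_inv]
    rw [h1, ih, h2, h3]
    ring

lemma Qp_erase0 {s t : ℤ} (hs : s ≤ 0) (ht : 0 < t) (κ w : ℂ) :
    ∏ l ∈ (Finset.Ico s t).erase 0, Ee κ w l = Qp κ w s 0 * Qp κ w 1 t := by
  have hset : (Finset.Ico s t).erase 0 = Finset.Ico s 0 ∪ Finset.Ico 1 t := by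
    ext l
    simp only [Finset.mem_erase, Finset.mem_Ico, Finset.mem_union]
    omega
  rw [hset, Finset.prod_union (by
    rw [Finset.disjoint_left]
    intro l hl hl'
    simp only [Finset.mem_Ico] at hl hl'
    omega)]
  rw [Qp, Qp]

lemma Ee_eq_zero_iff (hκ0 : κ ≠ 0) (hw : w ≠ 0) (l : ℤ) :
    Ee κ w l = 0 ↔ w ^ 2 * (κ ^ 2) ^ l = 1 := by
  have hne : κ ^ l * w ≠ 0 := mul_ne_zero (zpow_ne_zero l hκ0) hw
  have hq2 : ((κ : ℂ) ^ 2) ^ l = κ ^ l * κ ^ l := by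
    rw [← zpow_add₀ hκ0, ← zpow_natCast κ 2, ← zpow_mul]
    norm_num [two_mul]
  have key : Ee κ w l * (κ ^ l * w) = w ^ 2 * (κ ^ 2) ^ l - 1 := by
    rw [Ee, sub_mul, hq2,
      show κ ^ (-l) * w⁻¹ * (κ ^ l * w) = (κ ^ (-l) * κ ^ l) * (w⁻¹ * w) by ring,
      ← zpow_add₀ hκ0, neg_add_cancel, inv_mul_cancel₀ hw, zpow_zero]
    ring
  constructor
  · intro h
    have := key
    rw [h, zero_mul] at this
    linear_combination this.symm
  · intro h
    have h2 : Ee κ w l * (κ ^ l * w) = 0 := by rw [key, h, sub_self]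
    exact (mul_eq_zero.mp h2).resolve_right hne

lemma br_ne_zero (hκ0 : κ ≠ 0) {ζ : ℂ} (hw : ζ ≠ 0) {M : ℕ}
    (H : ∀ l : ℕ, l < M → ζ ^ 2 * (κ ^ 2) ^ (l : ℤ) ≠ 1) : br κ ζ M ≠ 0 := by
  rw [br_eq]
  exact Finset.prod_ne_zero_iff.mpr fun l hl =>
    fun h0 => H l (Finset.mem_range.mp hl) ((Ee_eq_zero_iff hκ0 hw _).mp h0)


variable {n : ℕ}

@[simp] lemma ss_ne_zero (j : Fin n) : (j.succ.succ : Fin (n+2)) ≠ 0 := Fin.succ_ne_zero _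
@[simp] lemma ss_ne_one (j : Fin n) : (j.succ.succ : Fin (n+2)) ≠ 1 := by
  simp [Fin.ext_iff, Fin.val_succ]
@[simp] lemma one_ne_zero' : (1 : Fin (n+2)) ≠ 0 := by
  simp [Fin.ext_iff]
@[simp] lemma zero_ne_one' : (0 : Fin (n+2)) ≠ 1 := by
  simp [Fin.ext_iff]
@[simp] lemma zero_ne_ss (j : Fin n) : (0 : Fin (n+2)) ≠ j.succ.succ := (ss_ne_zero j).symm
@[simp] lemma one_ne_ss (j : Fin n) : (1 : Fin (n+2)) ≠ j.succ.succ := (ss_ne_one j).symm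

lemma prod_univ_split (f : Fin (n+2) → ℂ) :
    ∏ j, f j = f 0 * (f 1 * ∏ j : Fin n, f j.succ.succ) := by
  rw [Fin.prod_univ_succ, Fin.prod_univ_succ, Fin.succ_zero_eq_one]

lemma prod_filter_zero_split (f : Fin (n+2) → ℂ) :
    ∏ j ∈ Finset.univ.filter (fun j => j ≠ (0 : Fin (n+2))), f j =
      f 1 * ∏ j : Fin n, f j.succ.succ := by
  rw [Finset.prod_filter]
  rw [prod_univ_split]
  simp

lemma prod_filter_one_split (f : Fin (n+2) → ℂ) :
    ∏ j ∈ Finset.univ.filter (fun j => j ≠ (1 : Fin (n+2))), f j =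
      f 0 * ∏ j : Fin n, f j.succ.succ := by
  rw [Finset.prod_filter]
  rw [prod_univ_split]
  simp

lemma prod_filter_ss_split (f : Fin (n+2) → ℂ) (i : Fin n) :
    ∏ j ∈ Finset.univ.filter (fun j => j ≠ (i.succ.succ : Fin (n+2))), f j =
      f 0 * (f 1 * ∏ j ∈ Finset.univ.filter (fun j => j ≠ i), f j.succ.succ) := by
  rw [Finset.prod_filter, prod_univ_split, Finset.prod_filter]
  simp [Fin.succ_inj]

section Defs
variable (κ ρ : ℂ) (σ τ : Fin (n+2) → ℂ)

noncomputable def core (a b : ℕ) (z : ℂ) : ℂ :=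
  (br κ (κ*ρ) a / br κ κ a) * (br κ (κ*ρ) b / br κ κ b) *
  (br κ (ρ⁻¹ * κ^(-(b:ℤ)) * (z / σ 1)) a / br κ (κ^(-(b:ℤ)) * (z / σ 1)) a) *
  (br κ (ρ⁻¹ * κ^(-(a:ℤ)) * (σ 1 / z)) b / br κ (κ^(-(a:ℤ)) * (σ 1 / z)) b)

noncomputable def crossj (a b : ℕ) (k : Fin (n+2) → ℕ) (z : ℂ) : ℂ :=
  ∏ j : Fin n,
    ((br κ (ρ⁻¹ * κ^(-(k j.succ.succ : ℤ)) * (z / σ j.succ.succ)) a /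
        br κ (κ^(-(k j.succ.succ : ℤ)) * (z / σ j.succ.succ)) a) *
     (br κ (ρ⁻¹ * κ^(-(k j.succ.succ : ℤ)) * (σ 1 / σ j.succ.succ)) b /
        br κ (κ^(-(k j.succ.succ : ℤ)) * (σ 1 / σ j.succ.succ)) b))

noncomputable def crossi (a b : ℕ) (k : Fin (n+2) → ℕ) (z : ℂ) : ℂ :=
  ∏ i : Fin n,
    ((br κ (ρ⁻¹ * κ^(-(a:ℤ)) * (σ i.succ.succ / z)) (k i.succ.succ) /
        br κ (κ^(-(a:ℤ)) * (σ i.succ.succ / z)) (k i.succ.succ)) *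
     (br κ (ρ⁻¹ * κ^(-(b:ℤ)) * (σ i.succ.succ / σ 1)) (k i.succ.succ) /
        br κ (κ^(-(b:ℤ)) * (σ i.succ.succ / σ 1)) (k i.succ.succ)))

noncomputable def tauc (a b : ℕ) (z : ℂ) : ℂ :=
  ∏ t : Fin (n+2),
    ((br κ (ρ * z / τ t) a / br κ (z / τ t) a) *
     (br κ (ρ * σ 1 / τ t) b / br κ (σ 1 / τ t) b))

noncomputable def wpart (k : Fin (n+2) → ℕ) : ℂ :=
  (∏ i : Fin n, br κ (κ*ρ) (k i.succ.succ) / br κ κ (k i.succ.succ)) *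
  (∏ i : Fin n, ∏ j ∈ Finset.univ.filter (fun j => j ≠ i),
      br κ (ρ⁻¹ * κ^(-(k j.succ.succ : ℤ)) * (σ i.succ.succ / σ j.succ.succ)) (k i.succ.succ) /
        br κ (κ^(-(k j.succ.succ : ℤ)) * (σ i.succ.succ / σ j.succ.succ)) (k i.succ.succ)) *
  (∏ t : Fin (n+2), ∏ j : Fin n,
      br κ (ρ * σ j.succ.succ / τ t) (k j.succ.succ) / br κ (σ j.succ.succ / τ t) (k j.succ.succ))

lemma Xsplit (k : Fin (n+2) → ℕ) (z : ℂ) :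
    Xsum κ ρ k (Function.update σ 0 z) τ =
      core κ ρ σ (k 0) (k 1) z * crossj κ ρ σ (k 0) (k 1) k z *
        crossi κ ρ σ (k 0) (k 1) k z * tauc κ ρ σ τ (k 0) (k 1) z * wpart κ ρ σ τ k := by
  rw [Xsum, core, crossj, crossi, tauc, wpart]
  rw [prod_univ_split (fun i => br κ (κ * ρ) (k i) / br κ κ (k i))]
  rw [prod_univ_split (fun i => ∏ j ∈ Finset.univ.filter (fun j => j ≠ i),
      br κ (ρ⁻¹ * κ ^ (-(k j : ℤ)) * (Function.update σ 0 z i / Function.update σ 0 z j)) (k i) /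
        br κ (κ ^ (-(k j : ℤ)) * (Function.update σ 0 z i / Function.update σ 0 z j)) (k i))]
  rw [prod_filter_zero_split, prod_filter_one_split]
  rw [Finset.prod_congr rfl (fun i _ => prod_filter_ss_split (fun j =>
      br κ (ρ⁻¹ * κ ^ (-(k j : ℤ)) * (Function.update σ 0 z i.succ.succ / Function.update σ 0 z j)) (k i.succ.succ) /
        br κ (κ ^ (-(k j : ℤ)) * (Function.update σ 0 z i.succ.succ / Function.update σ 0 z j)) (k i.succ.succ)) i)]
  rw [Finset.prod_congr rfl (fun t _ => prod_univ_split (fun j =>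
      br κ (ρ * Function.update σ 0 z j / τ t) (k j) / br κ (Function.update σ 0 z j / τ t) (k j)))]
  simp only [Function.update_self, Function.update_of_ne (one_ne_zero' (n := n)),
    Function.update_of_ne (ss_ne_zero (n := n) _), div_eq_mul_inv,
    Finset.prod_mul_distrib, Finset.prod_inv_distrib, mul_one, one_mul]
  ring
end Defs
end NP

namespace NP
section Extract
variable {n : ℕ} {κ ρ : ℂ}

noncomputable def fA (κ σ1 : ℂ) (p : ℤ) (z : ℂ) : ℂ := κ^(-p) * (z / σ1) - κ^p * (σ1 / z)

noncomputable def EA (κ σ1 : ℂ) (p : ℤ) (a b : ℕ) (z : ℂ) : ℂ :=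
  ∏ l ∈ (Finset.range a).erase ((b:ℤ) - p).toNat, Ee κ (z / σ1) (-(b:ℤ) + l)

noncomputable def EB (κ σ1 : ℂ) (p : ℤ) (a b : ℕ) (z : ℂ) : ℂ :=
  ∏ l ∈ (Finset.range b).erase ((a:ℤ) + p).toNat, Ee κ (σ1 / z) (-(a:ℤ) + l)

lemma br_shift (hκ0 : κ ≠ 0) (s : ℤ) (w : ℂ) (M : ℕ) :
    br κ (κ ^ s * w) M = ∏ l ∈ Finset.range M, Ee κ w (s + l) := by
  rw [br_eq]
  exact Finset.prod_congr rfl fun l _ => Ee_shift hκ0 s l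

lemma br_extractA (hκ0 : κ ≠ 0) {p : ℤ} {a b : ℕ} (h1 : (b:ℤ) - a < p) (h2 : p ≤ b)
    (σ1 z : ℂ) :
    br κ (κ ^ (-(b:ℤ)) * (z / σ1)) a = fA κ σ1 p z * EA κ σ1 p a b z := by
  rw [br_shift hκ0, ← Finset.mul_prod_erase (Finset.range a) _
    (Finset.mem_range.mpr (show ((b:ℤ)-p).toNat < a by omega)), EA]
  congr 1
  rw [show -(b:ℤ) + ((((b:ℤ)-p).toNat : ℕ) : ℤ) = -p by omega, Ee, fA, neg_neg, inv_div]

lemma br_extractB (hκ0 : κ ≠ 0) {p : ℤ} {a b : ℕ} (h1 : (0:ℤ) ≤ (a:ℤ) + p)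
    (h2 : (a:ℤ) + p < b) (σ1 z : ℂ) :
    br κ (κ ^ (-(a:ℤ)) * (σ1 / z)) b = (-(fA κ σ1 p z)) * EB κ σ1 p a b z := by
  rw [br_shift hκ0, ← Finset.mul_prod_erase (Finset.range b) _
    (Finset.mem_range.mpr (show ((a:ℤ)+p).toNat < b by omega)), EB]
  congr 1
  rw [show -(a:ℤ) + ((((a:ℤ)+p).toNat : ℕ) : ℤ) = p by omega, Ee, fA, inv_div]
  ring

lemma prod_erase_range (κ w : ℂ) (s : ℤ) (a l₀ : ℕ) (hl : (l₀:ℤ) = -s) :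
    ∏ l ∈ (Finset.range a).erase l₀, Ee κ w (s + l) =
      ∏ l ∈ (Finset.Ico s (s + a)).erase 0, Ee κ w l := by
  refine Finset.prod_nbij' (fun l => s + (l:ℤ)) (fun l => (l - s).toNat) ?_ ?_ ?_ ?_ ?_
  · intro x hx
    simp only [Finset.mem_erase, Finset.mem_range, Finset.mem_Ico] at hx ⊢
    omega
  · intro x hx
    simp only [Finset.mem_erase, Finset.mem_range, Finset.mem_Ico] at hx ⊢
    omega
  · intro x hx
    simp only [Finset.mem_erase, Finset.mem_range] at hx
    omega
  · intro x hx
    simp only [Finset.mem_erase, Finset.mem_Ico] at hx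
    omega
  · intro x _; rfl

lemma EA_at_c (hκ0 : κ ≠ 0) {σ1 : ℂ} (hσ1 : σ1 ≠ 0) {p : ℤ} {a b : ℕ}
    (h1 : (b:ℤ) - a < p) (h2 : p ≤ b) :
    EA κ σ1 p a b (κ^p * σ1) = Qp κ 1 (p - b) 0 * Qp κ 1 1 ((p - b) + a) := by
  rw [EA]
  have harg : (κ^p * σ1) / σ1 = κ^p * 1 := by
    rw [mul_one, mul_div_assoc, div_self hσ1, mul_one]
  calc ∏ l ∈ (Finset.range a).erase ((b:ℤ) - p).toNat, Ee κ (κ^p * σ1 / σ1) (-(b:ℤ) + l)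
      = ∏ l ∈ (Finset.range a).erase ((b:ℤ) - p).toNat, Ee κ 1 ((p - b) + l) := by
        refine Finset.prod_congr rfl fun l _ => ?_
        rw [harg, Ee_shift hκ0, show p + (-(b:ℤ) + l) = (p - b) + l by ring]
    _ = ∏ l ∈ (Finset.Ico (p - b) ((p - b) + a)).erase 0, Ee κ 1 l :=
        prod_erase_range κ 1 (p - b) a _ (by omega)
    _ = Qp κ 1 (p - b) 0 * Qp κ 1 1 ((p - b) + a) :=
        Qp_erase0 (by omega) (by omega) κ 1

lemma EB_at_c (hκ0 : κ ≠ 0) {σ1 : ℂ} (hσ1 : σ1 ≠ 0) {p : ℤ} {a b : ℕ}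
    (h1 : (0:ℤ) ≤ (a:ℤ) + p) (h2 : (a:ℤ) + p < b) :
    EB κ σ1 p a b (κ^p * σ1) = Qp κ 1 (-(a:ℤ) - p) 0 * Qp κ 1 1 ((-(a:ℤ) - p) + b) := by
  rw [EB]
  have harg : σ1 / (κ^p * σ1) = κ^(-p) * 1 := by
    rw [mul_one, zpow_neg, eq_comm, inv_eq_iff_eq_inv, inv_div, mul_div_assoc,
      div_self hσ1, mul_one]
  calc ∏ l ∈ (Finset.range b).erase ((a:ℤ) + p).toNat, Ee κ (σ1 / (κ^p * σ1)) (-(a:ℤ) + l)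
      = ∏ l ∈ (Finset.range b).erase ((a:ℤ) + p).toNat, Ee κ 1 ((-(a:ℤ) - p) + l) := by
        refine Finset.prod_congr rfl fun l _ => ?_
        rw [harg, Ee_shift hκ0, show -p + (-(a:ℤ) + l) = (-(a:ℤ) - p) + l by ring]
    _ = ∏ l ∈ (Finset.Ico (-(a:ℤ) - p) ((-(a:ℤ) - p) + b)).erase 0, Ee κ 1 l :=
        prod_erase_range κ 1 _ b _ (by omega)
    _ = Qp κ 1 (-(a:ℤ) - p) 0 * Qp κ 1 1 ((-(a:ℤ) - p) + b) :=
        Qp_erase0 (by omega) (by omega) κ 1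

end Extract
end NP
namespace NP
section Analysis
variable {n : ℕ} {κ ρ : ℂ} {c : ℂ}

lemma hq_pos (hκ0 : κ ≠ 0) (hκ : ∀ m : ℕ, 1 ≤ m → κ^(2*m) ≠ 1) :
    ∀ m : ℕ, m ≠ 0 → ((κ^2):ℂ)^(m:ℤ) ≠ 1 := by
  intro m hm
  rw [zpow_natCast, ← pow_mul]
  exact hκ m (by omega)

lemma hq_ne_one (hκ0 : κ ≠ 0) (hκ : ∀ m : ℕ, 1 ≤ m → κ^(2*m) ≠ 1) :
    ∀ m : ℤ, m ≠ 0 → ((κ^2):ℂ)^m ≠ 1 := by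
  intro m hm
  rcases lt_trichotomy m 0 with h | h | h
  · intro h1
    have h2 : ((κ^2):ℂ)^(-m) = 1 := by rw [zpow_neg, h1, inv_one]
    have h3 := hq_pos hκ0 hκ (-m).toNat (by omega)
    rw [show ((-m).toNat : ℤ) = -m by omega] at h3
    exact h3 h2
  · exact absurd h hm
  · have h3 := hq_pos hκ0 hκ m.toNat (by omega)
    rwa [show (m.toNat : ℤ) = m by omega] at h3

lemma zpow_sq (hκ0 : κ ≠ 0) (e : ℤ) : ((κ:ℂ)^e)^2 = (κ^2)^e := by
  rw [← zpow_natCast (κ^e) 2, ← zpow_mul, mul_comm, zpow_mul, zpow_natCast]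

lemma sq_shift (hκ0 : κ ≠ 0) (e : ℤ) (w : ℂ) : ((κ:ℂ)^e * w)^2 = (κ^2)^e * w^2 := by
  rw [mul_pow, zpow_sq hκ0]

lemma br_ne_zero_pow (hκ0 : κ ≠ 0) (hκq : ∀ m : ℤ, m ≠ 0 → ((κ^2):ℂ)^m ≠ 1)
    {ζ : ℂ} (hζ : ζ ≠ 0) (e : ℤ) (hsq : ζ^2 = (κ^2)^e)
    {M : ℕ} (he : ∀ l : ℕ, l < M → e + l ≠ 0) : br κ ζ M ≠ 0 := by
  refine br_ne_zero hκ0 hζ fun l hl hone => ?_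
  rw [hsq, ← zpow_add₀ (pow_ne_zero 2 hκ0)] at hone
  exact hκq (e + l) (he l hl) hone

lemma br_ne_zero_gen (hκ0 : κ ≠ 0) {ζ x : ℂ} (hζ : ζ ≠ 0) (e : ℤ)
    (hsq : ζ^2 = (κ^2)^e * x) (hx : ∀ m : ℤ, x ≠ (κ^2)^m) (M : ℕ) : br κ ζ M ≠ 0 := by
  refine br_ne_zero hκ0 hζ fun l hl hone => ?_
  rw [hsq] at hone
  apply hx (-(e + l))
  have hq0 : ((κ^2):ℂ)^(e + (l:ℤ)) ≠ 0 := zpow_ne_zero _ (pow_ne_zero 2 hκ0)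
  have h2 : x * ((κ^2):ℂ)^(e + (l:ℤ)) = 1 := by
    rw [zpow_add₀ (pow_ne_zero 2 hκ0)]
    linear_combination hone
  rw [zpow_neg]
  exact eq_inv_of_mul_eq_one_left h2

lemma gen_inv {x : ℂ} (hx : ∀ m : ℤ, x ≠ (κ^2)^m) : ∀ m : ℤ, x⁻¹ ≠ (κ^2)^m := by
  intro m h
  apply hx (-m)
  rw [← inv_inv x, h, ← zpow_neg]

lemma Qp_one_ne (hκ0 : κ ≠ 0) (hκq : ∀ m : ℤ, m ≠ 0 → ((κ^2):ℂ)^m ≠ 1)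
    (s t : ℤ) (h : ∀ l : ℤ, s ≤ l → l < t → l ≠ 0) : Qp κ 1 s t ≠ 0 := by
  rw [Qp]
  refine Finset.prod_ne_zero_iff.mpr fun l hl h0 => ?_
  rw [Finset.mem_Ico] at hl
  have := (Ee_eq_zero_iff hκ0 one_ne_zero l).mp h0
  rw [one_pow, one_mul] at this
  exact hκq l (h l hl.1 hl.2) this

lemma contAt_prod {α : Type*} (S : Finset α) (f : α → ℂ → ℂ)
    (hf : ∀ i ∈ S, ContinuousAt (f i) c) :
    ContinuousAt (fun z => ∏ i ∈ S, f i z) c := by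
  classical
  induction S using Finset.induction with
  | empty => simpa using continuousAt_const
  | insert _ _ hnot ih =>
    rename_i a s
    simp only [Finset.prod_insert hnot]
    exact (hf a (Finset.mem_insert_self a s)).mul
      (ih fun i hi => hf i (Finset.mem_insert_of_mem hi))

lemma contAt_br {g : ℂ → ℂ} (hg : ContinuousAt g c) (hg0 : g c ≠ 0) (M : ℕ) :
    ContinuousAt (fun z => br κ (g z) M) c := by
  simp only [br]
  exact contAt_prod _ _ fun l _ =>
    (continuousAt_const.mul hg).sub (continuousAt_const.mul (hg.inv₀ hg0))

lemma contAt_Ee {g : ℂ → ℂ} (hg : ContinuousAt g c) (hg0 : g c ≠ 0) (l : ℤ) :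
    ContinuousAt (fun z => Ee κ (g z) l) c := by
  simp only [Ee]
  exact (continuousAt_const.mul hg).sub (continuousAt_const.mul (hg.inv₀ hg0))

end Analysis
end NP
namespace NP
section Swaps
variable {n : ℕ} {κ ρ : ℂ}

lemma zpow_insert0 (x : ℂ) : x = (κ : ℂ)^(0:ℤ) * x := by rw [zpow_zero, one_mul]

lemma br_eq_Q0 (hκ0 : κ ≠ 0) (x : ℂ) (M : ℕ) : br κ x M = Qp κ x 0 (0 + M) := by
  conv_lhs => rw [show x = κ^(0:ℤ) * x by rw [zpow_zero, one_mul]]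
  rw [br_eq_Q hκ0]

lemma arg_cross (hκ0 : κ ≠ 0) (u y S : ℂ) (e f g : ℤ) (hefg : e + f = g) :
    u * κ^e * (κ^f * y / S) = κ^g * (u * (y / S)) := by
  have h : (κ:ℂ)^e * κ^f = κ^g := by rw [← zpow_add₀ hκ0]; congr 1
  calc u * κ^e * (κ^f * y / S) = (κ^e * κ^f) * (u * (y / S)) := by ring
  _ = κ^g * (u * (y / S)) := by rw [h]

lemma arg_cross1 (hκ0 : κ ≠ 0) (y S : ℂ) (e f g : ℤ) (hefg : e + f = g) :
    κ^e * (κ^f * y / S) = κ^g * (y / S) := by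
  have h := arg_cross hκ0 1 y S e f g hefg
  rw [one_mul, one_mul] at h
  exact h

lemma arg_crossi (hκ0 : κ ≠ 0) (u y S : ℂ) (e f g : ℤ) (hefg : e - f = g) :
    u * κ^e * (S / (κ^f * y)) = κ^g * (u * (S / y)) := by
  have h : (κ:ℂ)^e * (κ^f)⁻¹ = κ^g := by
    rw [← zpow_neg, ← zpow_add₀ hκ0, show e + -f = g by omega]
  rw [← h]
  ring

end Swaps
end NP
namespace NP
section Swaps2
variable {n : ℕ} {κ ρ : ℂ} {σ τ : Fin (n+2) → ℂ} {p : ℤ} {a b a' b' : ℕ}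

lemma crossi_swap (hκ0 : κ ≠ 0)
    (ha' : (a':ℤ) = b - p) (hb' : (b':ℤ) = a + p) (k : Fin (n+2) → ℕ) (σ : Fin (n+2) → ℂ) :
    crossi κ ρ σ a b k (κ^p * σ 1) = crossi κ ρ σ a' b' k (κ^p * σ 1) := by
  unfold crossi
  refine Finset.prod_congr rfl fun i _ => ?_
  rw [arg_crossi hκ0 ρ⁻¹ (σ 1) (σ i.succ.succ) (-(a:ℤ)) p (-(a:ℤ)-p) (by ring),
      arg_crossi hκ0 ρ⁻¹ (σ 1) (σ i.succ.succ) (-(a':ℤ)) p (-(b:ℤ)) (by omega),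
      show ρ⁻¹ * κ^(-(b:ℤ)) * (σ i.succ.succ / σ 1)
        = κ^(-(b:ℤ)) * (ρ⁻¹ * (σ i.succ.succ / σ 1)) by ring,
      show ρ⁻¹ * κ^(-(b':ℤ)) * (σ i.succ.succ / σ 1)
        = κ^(-(a:ℤ)-p) * (ρ⁻¹ * (σ i.succ.succ / σ 1)) by
        rw [show -((b':ℕ):ℤ) = -(a:ℤ)-p by omega]; ring]
  -- now also denominators
  have hd1 : ∀ e g : ℤ, e - p = g →
      κ^e * (σ i.succ.succ / (κ^p * σ 1)) = κ^g * (σ i.succ.succ / σ 1) := by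
    intro e g heg
    have h := arg_crossi hκ0 1 (σ 1) (σ i.succ.succ) e p g heg
    rw [one_mul, one_mul] at h
    exact h
  rw [hd1 (-(a:ℤ)) (-(a:ℤ)-p) (by ring), hd1 (-(a':ℤ)) (-(b:ℤ)) (by omega),
      show (κ:ℂ)^(-((b':ℕ):ℤ)) * (σ i.succ.succ / σ 1)
        = κ^(-(a:ℤ)-p) * (σ i.succ.succ / σ 1) by rw [show -((b':ℕ):ℤ) = -(a:ℤ)-p by omega]]
  ring

lemma tauc_swap (hκ0 : κ ≠ 0) (hA1 : (b:ℤ) - a < p) (hA2 : p ≤ b)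
    (ha' : (a':ℤ) = b - p) (hb' : (b':ℤ) = a + p) (σ τ : Fin (n+2) → ℂ) :
    tauc κ ρ σ τ a b (κ^p * σ 1) = tauc κ ρ σ τ a' b' (κ^p * σ 1) := by
  unfold tauc
  refine Finset.prod_congr rfl fun t _ => ?_
  rw [show ρ * (κ^p * σ 1) / τ t = κ^p * (ρ * σ 1 / τ t) by ring,
      show (κ^p * σ 1) / τ t = κ^p * (σ 1 / τ t) by ring,
      br_eq_Q hκ0, br_eq_Q hκ0, br_eq_Q hκ0, br_eq_Q hκ0,
      br_eq_Q0 hκ0, br_eq_Q0 hκ0, br_eq_Q0 hκ0, br_eq_Q0 hκ0,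
      div_mul_div_comm, div_mul_div_comm]
  congr 1
  · rw [show (0:ℤ) + (b':ℕ) = p + a by omega, show p + ((a':ℕ):ℤ) = 0 + b by omega]
    refine Qp_swap ?_ ?_ ?_ κ _ <;> omega
  · rw [show (0:ℤ) + (b':ℕ) = p + a by omega, show p + ((a':ℕ):ℤ) = 0 + b by omega]
    refine Qp_swap ?_ ?_ ?_ κ _ <;> omega

lemma crossj_swap (hκ0 : κ ≠ 0) (hA1 : (b:ℤ) - a < p) (hA2 : p ≤ b)
    (ha' : (a':ℤ) = b - p) (hb' : (b':ℤ) = a + p) (k : Fin (n+2) → ℕ) (σ : Fin (n+2) → ℂ) :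
    crossj κ ρ σ a b k (κ^p * σ 1) = crossj κ ρ σ a' b' k (κ^p * σ 1) := by
  unfold crossj
  refine Finset.prod_congr rfl fun j _ => ?_
  have harg : ∀ u : ℂ, u * κ^(-(k j.succ.succ:ℤ)) * (κ^p * σ 1 / σ j.succ.succ)
      = κ^(-(k j.succ.succ:ℤ) + p) * (u * (σ 1 / σ j.succ.succ)) := fun u =>
    arg_cross hκ0 u (σ 1) (σ j.succ.succ) _ p _ rfl
  have harg1 : κ^(-(k j.succ.succ:ℤ)) * (κ^p * σ 1 / σ j.succ.succ)
      = κ^(-(k j.succ.succ:ℤ) + p) * (σ 1 / σ j.succ.succ) :=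
    arg_cross1 hκ0 (σ 1) (σ j.succ.succ) _ p _ rfl
  have harg2 : ∀ u : ℂ, u * κ^(-(k j.succ.succ:ℤ)) * (σ 1 / σ j.succ.succ)
      = κ^(-(k j.succ.succ:ℤ)) * (u * (σ 1 / σ j.succ.succ)) := fun u => by ring
  rw [harg, harg1, harg2, br_eq_Q hκ0, br_eq_Q hκ0, br_eq_Q hκ0, br_eq_Q hκ0,
    br_eq_Q hκ0, br_eq_Q hκ0, br_eq_Q hκ0, br_eq_Q hκ0,
    div_mul_div_comm, div_mul_div_comm]
  set m := (k j.succ.succ : ℤ)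
  congr 1
  · rw [show -m + ((b':ℕ):ℤ) = (-m + p) + a by omega,
        show -m + p + ((a':ℕ):ℤ) = -m + b by omega]
    refine Qp_swap ?_ ?_ ?_ κ _ <;> omega
  · rw [show -m + ((b':ℕ):ℤ) = (-m + p) + a by omega,
        show -m + p + ((a':ℕ):ℤ) = -m + b by omega]
    refine Qp_swap ?_ ?_ ?_ κ _ <;> omega

end Swaps2
end NP
namespace NP
section Core
variable {n : ℕ} {κ ρ : ℂ} {σ τ : Fin (n+2) → ℂ} {p : ℤ} {a b a' b' : ℕ}

noncomputable def coreA (κ ρ : ℂ) (σ : Fin (n+2) → ℂ) (p : ℤ) (a b : ℕ) (z : ℂ) : ℂ :=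
  (br κ (κ*ρ) a / br κ κ a) * (br κ (κ*ρ) b / br κ κ b) *
  (br κ (ρ⁻¹ * κ^(-(b:ℤ)) * (z / σ 1)) a / EA κ (σ 1) p a b z) *
  (br κ (ρ⁻¹ * κ^(-(a:ℤ)) * (σ 1 / z)) b / br κ (κ^(-(a:ℤ)) * (σ 1 / z)) b)

noncomputable def coreB (κ ρ : ℂ) (σ : Fin (n+2) → ℂ) (p : ℤ) (a b : ℕ) (z : ℂ) : ℂ :=
  (br κ (κ*ρ) a / br κ κ a) * (br κ (κ*ρ) b / br κ κ b) *
  (br κ (ρ⁻¹ * κ^(-(b:ℤ)) * (z / σ 1)) a / br κ (κ^(-(b:ℤ)) * (z / σ 1)) a) *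
  (br κ (ρ⁻¹ * κ^(-(a:ℤ)) * (σ 1 / z)) b / EB κ (σ 1) p a b z)

lemma br_eq_Q' (hκ0 : κ ≠ 0) (s t : ℤ) (w : ℂ) (M : ℕ) (hts : t = s + M) :
    br κ (κ ^ s * w) M = Qp κ w s t := by rw [br_eq_Q hκ0, hts]

lemma br_krho' (hκ0 : κ ≠ 0) (M : ℕ) (s : ℤ) (hs : s = -(M:ℤ)) :
    br κ (κ*ρ) M = (-1)^M * Qp κ ρ⁻¹ s 0 := by
  rw [show κ*ρ = κ^(1:ℤ)*ρ by rw [zpow_one], br_eq_Q hκ0, Qp_reflect, hs]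

lemma br_kappa' (hκ0 : κ ≠ 0) (M : ℕ) (s : ℤ) (hs : s = -(M:ℤ)) :
    br κ κ M = (-1)^M * Qp κ 1 s 0 := by
  have h : br κ κ M = br κ (κ^(1:ℤ)*1) M := by norm_num
  rw [h, br_eq_Q hκ0, Qp_reflect, inv_one, hs]

lemma arg_diag (hκ0 : κ ≠ 0) {x : ℂ} (hx : x ≠ 0) (u : ℂ) (e f g : ℤ) (hefg : e + f = g) :
    u * κ^e * (κ^f * x / x) = κ^g * u := by
  have h : (κ:ℂ)^e * κ^f = κ^g := by rw [← zpow_add₀ hκ0, hefg]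
  calc u * κ^e * (κ^f * x / x) = (κ^e * κ^f) * u * (x / x) := by ring
  _ = κ^g * u := by rw [h, div_self hx, mul_one]

lemma arg_diag1 (hκ0 : κ ≠ 0) {x : ℂ} (hx : x ≠ 0) (e f g : ℤ) (hefg : e + f = g) :
    κ^e * (κ^f * x / x) = κ^g * 1 := by
  have h := arg_diag hκ0 hx 1 e f g hefg
  rw [one_mul] at h
  rw [h]

lemma arg_diagi (hκ0 : κ ≠ 0) {x : ℂ} (hx : x ≠ 0) (u : ℂ) (e f g : ℤ) (hefg : e - f = g) :
    u * κ^e * (x / (κ^f * x)) = κ^g * u := by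
  have h : (κ:ℂ)^e * (κ^f)⁻¹ = κ^g := by
    rw [← zpow_neg, ← zpow_add₀ hκ0, show e + -f = g by omega]
  calc u * κ^e * (x / (κ^f * x)) = (κ^e * (κ^f)⁻¹) * u * (x / x) := by
        rw [div_mul_eq_div_div_swap, div_div]
        ring
  _ = κ^g * u := by rw [h, div_self hx, mul_one]

lemma arg_diagi1 (hκ0 : κ ≠ 0) {x : ℂ} (hx : x ≠ 0) (e f g : ℤ) (hefg : e - f = g) :
    κ^e * (x / (κ^f * x)) = κ^g * 1 := by
  have h := arg_diagi hκ0 hx 1 e f g hefg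
  rw [one_mul] at h
  rw [h]

lemma coreAB (hκ0 : κ ≠ 0) (hσ1 : σ 1 ≠ 0)
    (hA1 : (b:ℤ) - a < p) (hA2 : p ≤ b) (ha' : (a':ℤ) = b - p) (hb' : (b':ℤ) = a + p) :
    coreA κ ρ σ p a b (κ^p * σ 1) = coreB κ ρ σ p a' b' (κ^p * σ 1) := by
  unfold coreA coreB
  rw [EA_at_c hκ0 hσ1 hA1 hA2,
      EB_at_c (a := a') (b := b') hκ0 hσ1 (by omega) (by omega),
      show -((a':ℕ):ℤ) - p = -(b:ℤ) by omega,
      show -(b:ℤ) + (b':ℕ) = (p - b) + a by omega,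
      br_krho' hκ0 a (-(a:ℤ)) rfl,
      br_krho' (ρ := ρ) hκ0 b (-(b:ℤ)) rfl,
      br_krho' hκ0 a' (p - b) (by omega),
      br_krho' (ρ := ρ) hκ0 b' (-(a:ℤ) - p) (by omega),
      br_kappa' hκ0 a (-(a:ℤ)) rfl,
      br_kappa' hκ0 b (-(b:ℤ)) rfl,
      br_kappa' hκ0 a' (p - b) (by omega),
      br_kappa' hκ0 b' (-(a:ℤ) - p) (by omega),
      arg_diag hκ0 hσ1 ρ⁻¹ (-(b:ℤ)) p (p - b) (by omega),
      arg_diag hκ0 hσ1 ρ⁻¹ (-((b':ℕ):ℤ)) p (-(a:ℤ)) (by omega),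
      arg_diag1 hκ0 hσ1 (-((b':ℕ):ℤ)) p (-(a:ℤ)) (by omega),
      arg_diagi hκ0 hσ1 ρ⁻¹ (-(a:ℤ)) p (-(a:ℤ) - p) (by omega),
      arg_diagi hκ0 hσ1 ρ⁻¹ (-((a':ℕ):ℤ)) p (-(b:ℤ)) (by omega),
      arg_diagi1 hκ0 hσ1 (-(a:ℤ)) p (-(a:ℤ) - p) (by omega),
      br_eq_Q' hκ0 (p - b) ((p - b) + a) ρ⁻¹ a rfl,
      br_eq_Q' hκ0 (-(a:ℤ)) ((-(a:ℤ) - p) + b) ρ⁻¹ a' (by omega),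
      br_eq_Q' hκ0 (-(a:ℤ)) ((-(a:ℤ) - p) + b) 1 a' (by omega),
      br_eq_Q' hκ0 (-(a:ℤ) - p) ((-(a:ℤ) - p) + b) ρ⁻¹ b rfl,
      br_eq_Q' hκ0 (-(b:ℤ)) ((p - b) + a) ρ⁻¹ b' (by omega),
      br_eq_Q' hκ0 (-(a:ℤ) - p) ((-(a:ℤ) - p) + b) 1 b rfl,
      div_mul_div_comm, div_mul_div_comm, div_mul_div_comm,
      div_mul_div_comm, div_mul_div_comm, div_mul_div_comm]
  have hsign : ((-1:ℂ))^a * (-1)^b = (-1)^a' * (-1)^b' := by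
    rw [← pow_add, ← pow_add, show a + b = a' + b' by omega]
  have h₁ : Qp κ ρ⁻¹ (p - b) ((p - b) + a) * Qp κ ρ⁻¹ (-(b:ℤ)) 0
      = Qp κ ρ⁻¹ (p - b) 0 * Qp κ ρ⁻¹ (-(b:ℤ)) ((p - b) + a) :=
    Qp_swap (by omega) (by omega) (by omega) κ ρ⁻¹
  have h₂ : Qp κ ρ⁻¹ (-(a:ℤ)) 0 * Qp κ ρ⁻¹ (-(a:ℤ) - p) ((-(a:ℤ) - p) + b)
      = Qp κ ρ⁻¹ (-(a:ℤ)) ((-(a:ℤ) - p) + b) * Qp κ ρ⁻¹ (-(a:ℤ) - p) 0 :=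
    Qp_swap (by omega) (by omega) (by omega) κ ρ⁻¹
  have h₁d : Qp κ 1 (p - b) ((p - b) + a) * Qp κ 1 (-(b:ℤ)) 0
      = Qp κ 1 (p - b) 0 * Qp κ 1 (-(b:ℤ)) ((p - b) + a) :=
    Qp_swap (by omega) (by omega) (by omega) κ 1
  have h₂d : Qp κ 1 (-(a:ℤ)) 0 * Qp κ 1 (-(a:ℤ) - p) ((-(a:ℤ) - p) + b)
      = Qp κ 1 (-(a:ℤ)) ((-(a:ℤ) - p) + b) * Qp κ 1 (-(a:ℤ) - p) 0 :=
    Qp_swap (by omega) (by omega) (by omega) κ 1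
  congr 1
  · linear_combination ((-1:ℂ))^a * (-1)^b * Qp κ ρ⁻¹ (-(b:ℤ)) 0
        * Qp κ ρ⁻¹ (p - b) ((p - b) + a) * h₂
      + ((-1:ℂ))^a * (-1)^b * Qp κ ρ⁻¹ (-(a:ℤ)) ((-(a:ℤ) - p) + b)
          * Qp κ ρ⁻¹ (-(a:ℤ) - p) 0 * h₁
      + Qp κ ρ⁻¹ (p - b) 0 * Qp κ ρ⁻¹ (-(b:ℤ)) ((p - b) + a)
          * Qp κ ρ⁻¹ (-(a:ℤ)) ((-(a:ℤ) - p) + b) * Qp κ ρ⁻¹ (-(a:ℤ) - p) 0 * hsign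
  · linear_combination ((-1:ℂ))^a * (-1)^b * Qp κ 1 (-(b:ℤ)) 0 * Qp κ 1 (p - b) 0
        * Qp κ 1 1 ((p - b) + a) * h₂d
      + Qp κ 1 (-(b:ℤ)) 0 * Qp κ 1 (p - b) 0 * Qp κ 1 1 ((p - b) + a)
          * Qp κ 1 (-(a:ℤ)) ((-(a:ℤ) - p) + b) * Qp κ 1 (-(a:ℤ) - p) 0 * hsign

end Core
end NP
namespace NP
section Glue
variable {n : ℕ} {κ ρ : ℂ} {σ τ : Fin (n+2) → ℂ} {p : ℤ} {a b a' b' : ℕ}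

lemma div_extract {N f E : ℂ} (hf : f ≠ 0) : N / (f * E) * f = N / E := by
  rcases eq_or_ne E 0 with hE | hE
  · simp [hE]
  · field_simp

lemma mul_fA_extract {X Y N f E : ℂ} (hf : f ≠ 0) :
    (X * (N / (f * E)) * Y) * f = X * (N / E) * Y := by
  calc (X * (N / (f * E)) * Y) * f = X * Y * (N / (f * E) * f) := by ring
  _ = X * Y * (N / E) := by rw [div_extract hf]
  _ = X * (N / E) * Y := by ring

lemma mul_fB_extract {X N f E : ℂ} (hf : f ≠ 0) :
    (X * (N / (-f * E))) * f = -(X * (N / E)) := by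
  calc (X * (N / (-f * E))) * f = -(X * (N / (f * E) * f)) := by
        rw [neg_mul, div_neg]; ring
  _ = -(X * (N / E)) := by rw [div_extract hf]

lemma core_mulA (hκ0 : κ ≠ 0) (hA1 : (b:ℤ) - a < p) (hA2 : p ≤ b) (z : ℂ)
    (hfa : fA κ (σ 1) p z ≠ 0) :
    core κ ρ σ a b z * fA κ (σ 1) p z = coreA κ ρ σ p a b z := by
  unfold core coreA
  rw [br_extractA hκ0 hA1 hA2]
  exact mul_fA_extract hfa

lemma core_mulB (hκ0 : κ ≠ 0) (hB1 : (0:ℤ) ≤ (a:ℤ) + p) (hB2 : (a:ℤ) + p < b) (z : ℂ)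
    (hfa : fA κ (σ 1) p z ≠ 0) :
    core κ ρ σ a b z * fA κ (σ 1) p z = -(coreB κ ρ σ p a b z) := by
  unfold core coreB
  rw [br_extractB hκ0 hB1 hB2, show -(fA κ (σ 1) p z) * EB κ (σ 1) p a b z
    = -fA κ (σ 1) p z * EB κ (σ 1) p a b z from rfl]
  exact mul_fB_extract hfa

lemma fA_factor (hκ0 : κ ≠ 0) {σ1 : ℂ} (hσ1 : σ1 ≠ 0) {z : ℂ} (hz : z ≠ 0) (p : ℤ) :
    fA κ σ1 p z = κ^(-p) * ((z - κ^p*σ1) * (z + κ^p*σ1)) / (σ1 * z) := by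
  have h1 : (κ:ℂ)^(-p) * κ^p = 1 := by
    rw [← zpow_add₀ hκ0, neg_add_cancel, zpow_zero]
  rw [fA, zpow_neg]
  have hu : (κ:ℂ)^p ≠ 0 := zpow_ne_zero p hκ0
  field_simp
  ring

end Glue
end NP
namespace NP
section Cont
variable {n : ℕ} {κ ρ : ℂ} {σ τ : Fin (n+2) → ℂ} {p : ℤ} {a b : ℕ}

lemma arg_crossi1 (hκ0 : κ ≠ 0) (y S : ℂ) (e f g : ℤ) (hefg : e - f = g) :
    κ^e * (S / (κ^f * y)) = κ^g * (S / y) := by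
  have h := arg_crossi hκ0 1 y S e f g hefg
  simpa only [one_mul] using h

lemma contAt_crossj (hκ0 : κ ≠ 0) (hρ0 : ρ ≠ 0) (hσ1 : σ 1 ≠ 0)
    (hσss : ∀ j : Fin n, σ j.succ.succ ≠ 0)
    (hg1j : ∀ j : Fin n, ∀ m : ℤ, (σ 1)^2/(σ j.succ.succ)^2 ≠ (κ^2)^m)
    (k : Fin (n+2) → ℕ) (a b : ℕ) :
    ContinuousAt (fun z => crossj κ ρ σ a b k z) (κ^p * σ 1) := by
  have hc : (κ:ℂ)^p * σ 1 ≠ 0 := mul_ne_zero (zpow_ne_zero _ hκ0) hσ1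
  simp only [crossj]
  refine contAt_prod _ _ fun j _ => ContinuousAt.mul (ContinuousAt.div ?_ ?_ ?_)
    continuousAt_const
  · exact contAt_br (continuousAt_const.mul (continuousAt_id.div_const _))
      (mul_ne_zero (mul_ne_zero (inv_ne_zero hρ0) (zpow_ne_zero _ hκ0))
        (div_ne_zero hc (hσss j))) a
  · exact contAt_br (continuousAt_const.mul (continuousAt_id.div_const _))
      (mul_ne_zero (zpow_ne_zero _ hκ0) (div_ne_zero hc (hσss j))) a
  · rw [arg_cross1 hκ0 (σ 1) (σ j.succ.succ) (-(k j.succ.succ : ℤ)) p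
      (-(k j.succ.succ : ℤ) + p) rfl]
    exact br_ne_zero_gen hκ0
      (mul_ne_zero (zpow_ne_zero _ hκ0) (div_ne_zero hσ1 (hσss j)))
      (-(k j.succ.succ : ℤ) + p) (by rw [sq_shift hκ0, div_pow]) (hg1j j) a

lemma contAt_crossi (hκ0 : κ ≠ 0) (hρ0 : ρ ≠ 0) (hσ1 : σ 1 ≠ 0)
    (hσss : ∀ j : Fin n, σ j.succ.succ ≠ 0)
    (hgj1 : ∀ j : Fin n, ∀ m : ℤ, (σ j.succ.succ)^2/(σ 1)^2 ≠ (κ^2)^m)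
    (k : Fin (n+2) → ℕ) (a b : ℕ) :
    ContinuousAt (fun z => crossi κ ρ σ a b k z) (κ^p * σ 1) := by
  have hc : (κ:ℂ)^p * σ 1 ≠ 0 := mul_ne_zero (zpow_ne_zero _ hκ0) hσ1
  simp only [crossi]
  refine contAt_prod _ _ fun i _ => ContinuousAt.mul (ContinuousAt.div ?_ ?_ ?_)
    continuousAt_const
  · exact contAt_br (continuousAt_const.mul (continuousAt_const.div continuousAt_id hc))
      (mul_ne_zero (mul_ne_zero (inv_ne_zero hρ0) (zpow_ne_zero _ hκ0))
        (div_ne_zero (hσss i) hc)) _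
  · exact contAt_br (continuousAt_const.mul (continuousAt_const.div continuousAt_id hc))
      (mul_ne_zero (zpow_ne_zero _ hκ0) (div_ne_zero (hσss i) hc)) _
  · rw [arg_crossi1 hκ0 (σ 1) (σ i.succ.succ) (-(a:ℤ)) p (-(a:ℤ) - p) rfl]
    exact br_ne_zero_gen hκ0
      (mul_ne_zero (zpow_ne_zero _ hκ0) (div_ne_zero (hσss i) hσ1))
      (-(a:ℤ) - p) (by rw [sq_shift hκ0, div_pow]) (hgj1 i) _

lemma contAt_tauc (hκ0 : κ ≠ 0) (hρ0 : ρ ≠ 0) (hσ1 : σ 1 ≠ 0)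
    (hτ0 : ∀ t, τ t ≠ 0)
    (hg1τ : ∀ t : Fin (n+2), ∀ m : ℤ, (σ 1)^2/(τ t)^2 ≠ (κ^2)^m)
    (a b : ℕ) :
    ContinuousAt (fun z => tauc κ ρ σ τ a b z) (κ^p * σ 1) := by
  have hc : (κ:ℂ)^p * σ 1 ≠ 0 := mul_ne_zero (zpow_ne_zero _ hκ0) hσ1
  simp only [tauc]
  refine contAt_prod _ _ fun t _ => ContinuousAt.mul (ContinuousAt.div ?_ ?_ ?_)
    continuousAt_const
  · exact contAt_br ((continuousAt_const.mul continuousAt_id).div_const _)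
      (by
        refine div_ne_zero (mul_ne_zero hρ0 hc) (hτ0 t)) a
  · exact contAt_br (continuousAt_id.div_const _) (div_ne_zero hc (hτ0 t)) a
  · rw [show (κ^p * σ 1) / τ t = κ^p * (σ 1 / τ t) from mul_div_assoc _ _ _]
    exact br_ne_zero_gen hκ0 (mul_ne_zero (zpow_ne_zero _ hκ0)
      (div_ne_zero hσ1 (hτ0 t))) p (by rw [sq_shift hκ0, div_pow]) (hg1τ t) a

lemma contAt_core (hκ0 : κ ≠ 0) (hρ0 : ρ ≠ 0)
    (hκq : ∀ m : ℤ, m ≠ 0 → ((κ^2):ℂ)^m ≠ 1) (hσ1 : σ 1 ≠ 0)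
    (hA3 : ∀ l : ℕ, l < a → (-(b:ℤ) + p) + l ≠ 0)
    (hB4 : ∀ l : ℕ, l < b → (-(a:ℤ) - p) + l ≠ 0) :
    ContinuousAt (fun z => core κ ρ σ a b z) (κ^p * σ 1) := by
  have hc : (κ:ℂ)^p * σ 1 ≠ 0 := mul_ne_zero (zpow_ne_zero _ hκ0) hσ1
  simp only [core]
  refine ((continuousAt_const.mul (ContinuousAt.div ?_ ?_ ?_)).mul
    (ContinuousAt.div ?_ ?_ ?_))
  · exact contAt_br (continuousAt_const.mul (continuousAt_id.div_const _))
      (mul_ne_zero (mul_ne_zero (inv_ne_zero hρ0) (zpow_ne_zero _ hκ0))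
        (div_ne_zero hc hσ1)) a
  · exact contAt_br (continuousAt_const.mul (continuousAt_id.div_const _))
      (mul_ne_zero (zpow_ne_zero _ hκ0) (div_ne_zero hc hσ1)) a
  · rw [arg_diag1 hκ0 hσ1 (-(b:ℤ)) p (-(b:ℤ) + p) rfl]
    exact br_ne_zero_pow hκ0 hκq (mul_ne_zero (zpow_ne_zero _ hκ0) one_ne_zero)
      (-(b:ℤ) + p) (by rw [mul_one, zpow_sq hκ0]) hA3
  · exact contAt_br (continuousAt_const.mul (continuousAt_const.div continuousAt_id hc))
      (mul_ne_zero (mul_ne_zero (inv_ne_zero hρ0) (zpow_ne_zero _ hκ0))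
        (div_ne_zero hσ1 hc)) b
  · exact contAt_br (continuousAt_const.mul (continuousAt_const.div continuousAt_id hc))
      (mul_ne_zero (zpow_ne_zero _ hκ0) (div_ne_zero hσ1 hc)) b
  · rw [arg_diagi1 hκ0 hσ1 (-(a:ℤ)) p (-(a:ℤ) - p) rfl]
    exact br_ne_zero_pow hκ0 hκq (mul_ne_zero (zpow_ne_zero _ hκ0) one_ne_zero)
      (-(a:ℤ) - p) (by rw [mul_one, zpow_sq hκ0]) hB4

lemma contAt_coreA (hκ0 : κ ≠ 0) (hρ0 : ρ ≠ 0)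
    (hκq : ∀ m : ℤ, m ≠ 0 → ((κ^2):ℂ)^m ≠ 1) (hσ1 : σ 1 ≠ 0)
    (hA1 : (b:ℤ) - a < p) (hA2 : p ≤ b) :
    ContinuousAt (fun z => coreA κ ρ σ p a b z) (κ^p * σ 1) := by
  have hc : (κ:ℂ)^p * σ 1 ≠ 0 := mul_ne_zero (zpow_ne_zero _ hκ0) hσ1
  simp only [coreA]
  refine ((continuousAt_const.mul (ContinuousAt.div ?_ ?_ ?_)).mul
    (ContinuousAt.div ?_ ?_ ?_))
  · exact contAt_br (continuousAt_const.mul (continuousAt_id.div_const _))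
      (mul_ne_zero (mul_ne_zero (inv_ne_zero hρ0) (zpow_ne_zero _ hκ0))
        (div_ne_zero hc hσ1)) a
  · show ContinuousAt (fun z => EA κ (σ 1) p a b z) _
    unfold EA
    exact contAt_prod _ _ fun l _ => contAt_Ee (continuousAt_id.div_const _)
      (div_ne_zero hc hσ1) _
  · rw [EA_at_c hκ0 hσ1 hA1 hA2]
    exact mul_ne_zero (Qp_one_ne hκ0 hκq _ _ (by omega))
      (Qp_one_ne hκ0 hκq _ _ (by omega))
  · exact contAt_br (continuousAt_const.mul (continuousAt_const.div continuousAt_id hc))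
      (mul_ne_zero (mul_ne_zero (inv_ne_zero hρ0) (zpow_ne_zero _ hκ0))
        (div_ne_zero hσ1 hc)) b
  · exact contAt_br (continuousAt_const.mul (continuousAt_const.div continuousAt_id hc))
      (mul_ne_zero (zpow_ne_zero _ hκ0) (div_ne_zero hσ1 hc)) b
  · rw [arg_diagi1 hκ0 hσ1 (-(a:ℤ)) p (-(a:ℤ) - p) rfl]
    exact br_ne_zero_pow hκ0 hκq (mul_ne_zero (zpow_ne_zero _ hκ0) one_ne_zero)
      (-(a:ℤ) - p) (by rw [mul_one, zpow_sq hκ0]) (fun l hl => by omega)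

lemma contAt_coreB (hκ0 : κ ≠ 0) (hρ0 : ρ ≠ 0)
    (hκq : ∀ m : ℤ, m ≠ 0 → ((κ^2):ℂ)^m ≠ 1) (hσ1 : σ 1 ≠ 0)
    (hB1 : (0:ℤ) ≤ (a:ℤ) + p) (hB2 : (a:ℤ) + p < b) :
    ContinuousAt (fun z => coreB κ ρ σ p a b z) (κ^p * σ 1) := by
  have hc : (κ:ℂ)^p * σ 1 ≠ 0 := mul_ne_zero (zpow_ne_zero _ hκ0) hσ1
  simp only [coreB]
  refine ((continuousAt_const.mul (ContinuousAt.div ?_ ?_ ?_)).mul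
    (ContinuousAt.div ?_ ?_ ?_))
  · exact contAt_br (continuousAt_const.mul (continuousAt_id.div_const _))
      (mul_ne_zero (mul_ne_zero (inv_ne_zero hρ0) (zpow_ne_zero _ hκ0))
        (div_ne_zero hc hσ1)) a
  · exact contAt_br (continuousAt_const.mul (continuousAt_id.div_const _))
      (mul_ne_zero (zpow_ne_zero _ hκ0) (div_ne_zero hc hσ1)) a
  · rw [arg_diag1 hκ0 hσ1 (-(b:ℤ)) p (-(b:ℤ) + p) rfl]
    exact br_ne_zero_pow hκ0 hκq (mul_ne_zero (zpow_ne_zero _ hκ0) one_ne_zero)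
      (-(b:ℤ) + p) (by rw [mul_one, zpow_sq hκ0]) (fun l hl => by omega)
  · exact contAt_br (continuousAt_const.mul (continuousAt_const.div continuousAt_id hc))
      (mul_ne_zero (mul_ne_zero (inv_ne_zero hρ0) (zpow_ne_zero _ hκ0))
        (div_ne_zero hσ1 hc)) b
  · show ContinuousAt (fun z => EB κ (σ 1) p a b z) _
    unfold EB
    exact contAt_prod _ _ fun l _ => contAt_Ee (continuousAt_const.div continuousAt_id hc)
      (div_ne_zero hσ1 hc) _
  · rw [EB_at_c hκ0 hσ1 hB1 hB2]
    exact mul_ne_zero (Qp_one_ne hκ0 hκq _ _ (by omega))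
      (Qp_one_ne hκ0 hκq _ _ (by omega))

lemma crossj_congr {k k' : Fin (n+2) → ℕ}
    (h : ∀ j : Fin n, k j.succ.succ = k' j.succ.succ) (a b : ℕ) (z : ℂ) :
    crossj κ ρ σ a b k z = crossj κ ρ σ a b k' z := by
  unfold crossj
  exact Finset.prod_congr rfl fun j _ => by rw [h j]

lemma crossi_congr {k k' : Fin (n+2) → ℕ}
    (h : ∀ j : Fin n, k j.succ.succ = k' j.succ.succ) (a b : ℕ) (z : ℂ) :
    crossi κ ρ σ a b k z = crossi κ ρ σ a b k' z := by
  unfold crossi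
  exact Finset.prod_congr rfl fun i _ => by rw [h i]

lemma wpart_congr {k k' : Fin (n+2) → ℕ}
    (h : ∀ j : Fin n, k j.succ.succ = k' j.succ.succ) :
    wpart κ ρ σ τ k = wpart κ ρ σ τ k' := by
  unfold wpart
  congr 1
  · congr 1
    · exact Finset.prod_congr rfl fun i _ => by rw [h i]
    · exact Finset.prod_congr rfl fun i _ =>
        Finset.prod_congr rfl fun j _ => by rw [h i, h j]
  · exact Finset.prod_congr rfl fun t _ =>
      Finset.prod_congr rfl fun j _ => by rw [h j]

end Cont
end NP
namespace NP
open Filter Topology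
section Tend
variable {n : ℕ} {κ ρ : ℂ} {σ τ : Fin (n+2) → ℂ} {p : ℤ}

lemma tendsto_sub_c (c : ℂ) : Tendsto (fun z : ℂ => z - c) (𝓝[≠] c) (𝓝 0) := by
  have h : Tendsto (fun z : ℂ => z - c) (𝓝 c) (𝓝 (c - c)) :=
    (continuousAt_id.sub continuousAt_const).tendsto
  rw [sub_self] at h
  exact h.mono_left nhdsWithin_le_nhds

lemma tend_ratio (hκ0 : κ ≠ 0) {σ1 : ℂ} (hσ1 : σ1 ≠ 0) (p : ℤ) :
    Tendsto (fun z => (z - κ^p*σ1) * (fA κ σ1 p z)⁻¹) (𝓝[≠] (κ^p*σ1))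
      (𝓝 (κ^p * ((κ^p*σ1) * σ1) / (κ^p*σ1 + κ^p*σ1))) := by
  set c := κ^p*σ1 with hc
  have hc0 : c ≠ 0 := mul_ne_zero (zpow_ne_zero _ hκ0) hσ1
  have hcc : c + c ≠ 0 := by
    intro h
    rw [← two_mul] at h
    exact hc0 ((mul_eq_zero.mp h).resolve_left two_ne_zero)
  have hbase : Tendsto (fun z => κ^p * (z * σ1) / (z + c)) (𝓝[≠] c)
      (𝓝 (κ^p * (c * σ1) / (c + c))) := by
    refine ContinuousAt.tendsto ?_ |>.mono_left nhdsWithin_le_nhds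
    exact (continuousAt_const.mul (continuousAt_id.mul continuousAt_const)).div
      (continuousAt_id.add continuousAt_const) hcc
  refine hbase.congr' ?_
  have hev0 : ∀ᶠ z in 𝓝[≠] c, z ≠ 0 := by
    exact (eventually_ne_nhds hc0).filter_mono nhdsWithin_le_nhds
  have hevc : ∀ᶠ z in 𝓝[≠] c, z + c ≠ 0 := by
    have ht : Tendsto (fun z : ℂ => z + c) (𝓝 c) (𝓝 (c + c)) :=
      (continuousAt_id.add continuousAt_const).tendsto
    exact (ht.eventually_ne hcc).filter_mono nhdsWithin_le_nhds
  have hevne : ∀ᶠ z in 𝓝[≠] c, z ≠ c := by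
    exact eventually_mem_nhdsWithin.mono fun z hz => hz
  filter_upwards [hev0, hevc, hevne] with z hz0 hzc hzne
  rw [fA_factor hκ0 hσ1 hz0 p, ← hc]
  have hzc' : z - c ≠ 0 := sub_ne_zero.mpr hzne
  have hkp : (κ:ℂ)^(-p) ≠ 0 := zpow_ne_zero _ hκ0
  have h1 : (κ:ℂ)^(-p) * κ^p = 1 := by
    rw [← zpow_add₀ hκ0, neg_add_cancel, zpow_zero]
  field_simp
  ring_nf
  rw [← zpow_add₀ hκ0, add_neg_cancel, zpow_zero]

lemma typeO_tendsto (hκ0 : κ ≠ 0) (hρ0 : ρ ≠ 0)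
    (hκq : ∀ m : ℤ, m ≠ 0 → ((κ^2):ℂ)^m ≠ 1) (hσ1 : σ 1 ≠ 0)
    (hσss : ∀ j : Fin n, σ j.succ.succ ≠ 0) (hτ0 : ∀ t, τ t ≠ 0)
    (hg1j : ∀ j : Fin n, ∀ m : ℤ, (σ 1)^2/(σ j.succ.succ)^2 ≠ (κ^2)^m)
    (hgj1 : ∀ j : Fin n, ∀ m : ℤ, (σ j.succ.succ)^2/(σ 1)^2 ≠ (κ^2)^m)
    (hg1τ : ∀ t : Fin (n+2), ∀ m : ℤ, (σ 1)^2/(τ t)^2 ≠ (κ^2)^m)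
    (k : Fin (n+2) → ℕ)
    (hA : ¬((k 1:ℤ) - k 0 < p ∧ p ≤ (k 1:ℤ)))
    (hB : ¬(-(k 0:ℤ) ≤ p ∧ p ≤ (k 1:ℤ) - k 0 - 1)) :
    Tendsto (fun z => (z - κ^p * σ 1) * Xsum κ ρ k (Function.update σ 0 z) τ)
      (𝓝[≠] (κ^p * σ 1)) (𝓝 0) := by
  have hcont : ContinuousAt (fun z => Xsum κ ρ k (Function.update σ 0 z) τ) (κ^p * σ 1) := by
    have hXs : (fun z => Xsum κ ρ k (Function.update σ 0 z) τ)
        = fun z => core κ ρ σ (k 0) (k 1) z * crossj κ ρ σ (k 0) (k 1) k z *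
            crossi κ ρ σ (k 0) (k 1) k z * tauc κ ρ σ τ (k 0) (k 1) z * wpart κ ρ σ τ k :=
      funext fun z => Xsplit κ ρ σ τ k z
    rw [hXs]
    exact ((((contAt_core hκ0 hρ0 hκq hσ1
        (fun l hl h0 => hA (by omega)) (fun l hl h0 => hB (by omega))).mul
      (contAt_crossj hκ0 hρ0 hσ1 hσss hg1j k _ _)).mul
      (contAt_crossi hκ0 hρ0 hσ1 hσss hgj1 k _ _)).mul
      (contAt_tauc hκ0 hρ0 hσ1 hτ0 hg1τ _ _)).mul continuousAt_const
  have h2 := hcont.tendsto.mono_left (nhdsWithin_le_nhds (s := {(κ^p * σ 1)}ᶜ))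
  simpa using (tendsto_sub_c (κ^p * σ 1)).mul h2

end Tend
end NP
namespace NP
open Filter Topology
section Pair
variable {n : ℕ} {κ ρ : ℂ} {σ τ : Fin (n+2) → ℂ} {p : ℤ}

lemma pair_tendsto (hκ0 : κ ≠ 0) (hρ0 : ρ ≠ 0)
    (hκq : ∀ m : ℤ, m ≠ 0 → ((κ^2):ℂ)^m ≠ 1) (hσ1 : σ 1 ≠ 0)
    (hσss : ∀ j : Fin n, σ j.succ.succ ≠ 0) (hτ0 : ∀ t, τ t ≠ 0)
    (hg1j : ∀ j : Fin n, ∀ m : ℤ, (σ 1)^2/(σ j.succ.succ)^2 ≠ (κ^2)^m)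
    (hgj1 : ∀ j : Fin n, ∀ m : ℤ, (σ j.succ.succ)^2/(σ 1)^2 ≠ (κ^2)^m)
    (hg1τ : ∀ t : Fin (n+2), ∀ m : ℤ, (σ 1)^2/(τ t)^2 ≠ (κ^2)^m)
    (k k' : Fin (n+2) → ℕ)
    (h1 : (k 1:ℤ) - k 0 < p) (h2 : p ≤ (k 1 : ℤ))
    (ha' : (k' 0:ℤ) = (k 1:ℤ) - p) (hb' : (k' 1:ℤ) = (k 0:ℤ) + p)
    (hss : ∀ j : Fin n, k' j.succ.succ = k j.succ.succ) :
    Tendsto (fun z => (z - κ^p * σ 1) *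
        (Xsum κ ρ k (Function.update σ 0 z) τ + Xsum κ ρ k' (Function.update σ 0 z) τ))
      (𝓝[≠] (κ^p * σ 1)) (𝓝 0) := by
  set c := κ^p * σ 1 with hc
  have hc0 : c ≠ 0 := mul_ne_zero (zpow_ne_zero _ hκ0) hσ1
  have hcc : c + c ≠ 0 := by
    intro h
    rw [← two_mul] at h
    exact hc0 ((mul_eq_zero.mp h).resolve_left two_ne_zero)
  set a := k 0 with hadef
  set b := k 1 with hbdef
  set RA := fun z => coreA κ ρ σ p a b z * crossj κ ρ σ a b k z *
      crossi κ ρ σ a b k z * tauc κ ρ σ τ a b z * wpart κ ρ σ τ k with hRA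
  set RB := fun z => coreB κ ρ σ p (k' 0) (k' 1) z * crossj κ ρ σ (k' 0) (k' 1) k z *
      crossi κ ρ σ (k' 0) (k' 1) k z * tauc κ ρ σ τ (k' 0) (k' 1) z * wpart κ ρ σ τ k
      with hRB
  -- eventual equality
  have hev : (fun z => (z - c) *
        (Xsum κ ρ k (Function.update σ 0 z) τ + Xsum κ ρ k' (Function.update σ 0 z) τ))
      =ᶠ[𝓝[≠] c] fun z => ((z - c) * (fA κ (σ 1) p z)⁻¹) * (RA z - RB z) := by
    have hev0 : ∀ᶠ z in 𝓝[≠] c, z ≠ 0 :=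
      (eventually_ne_nhds hc0).filter_mono nhdsWithin_le_nhds
    have hevne : ∀ᶠ z in 𝓝[≠] c, z ≠ c := eventually_mem_nhdsWithin.mono fun z hz => hz
    have hevc : ∀ᶠ z in 𝓝[≠] c, z + c ≠ 0 := by
      have ht : Tendsto (fun z : ℂ => z + c) (𝓝 c) (𝓝 (c + c)) :=
        (continuousAt_id.add continuousAt_const).tendsto
      exact (ht.eventually_ne hcc).filter_mono nhdsWithin_le_nhds
    filter_upwards [hev0, hevne, hevc] with z hz0 hzne hzc
    have hfz : fA κ (σ 1) p z ≠ 0 := by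
      rw [fA_factor hκ0 hσ1 hz0 p, ← hc]
      exact div_ne_zero (mul_ne_zero (zpow_ne_zero _ hκ0)
        (mul_ne_zero (sub_ne_zero.mpr hzne) hzc)) (mul_ne_zero hσ1 hz0)
    have hFk : Xsum κ ρ k (Function.update σ 0 z) τ = RA z / fA κ (σ 1) p z := by
      rw [eq_div_iff hfz]
      have e1 : Xsum κ ρ k (Function.update σ 0 z) τ * fA κ (σ 1) p z
          = (core κ ρ σ a b z * fA κ (σ 1) p z) * (crossj κ ρ σ a b k z *
            crossi κ ρ σ a b k z * tauc κ ρ σ τ a b z * wpart κ ρ σ τ k) := by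
        rw [Xsplit κ ρ σ τ k z, ← hadef, ← hbdef]
        ring
      rw [e1, core_mulA hκ0 h1 h2 z hfz, hRA]
      ring
    have hFk' : Xsum κ ρ k' (Function.update σ 0 z) τ = -(RB z) / fA κ (σ 1) p z := by
      rw [eq_div_iff hfz]
      have e1 : Xsum κ ρ k' (Function.update σ 0 z) τ * fA κ (σ 1) p z
          = (core κ ρ σ (k' 0) (k' 1) z * fA κ (σ 1) p z) * (crossj κ ρ σ (k' 0) (k' 1) k' z *
            crossi κ ρ σ (k' 0) (k' 1) k' z * tauc κ ρ σ τ (k' 0) (k' 1) z *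
            wpart κ ρ σ τ k') := by
        rw [Xsplit κ ρ σ τ k' z]
        ring
      rw [e1, core_mulB hκ0 (by omega) (by omega) z hfz,
        crossj_congr hss, crossi_congr hss, wpart_congr hss, hRB]
      ring
    rw [hFk, hFk']
    rw [← add_div, ← sub_eq_add_neg, div_eq_mul_inv]
    ring
  refine Tendsto.congr' hev.symm ?_
  have hrat := tend_ratio hκ0 hσ1 p
  have hra : ContinuousAt RA c := by
    rw [hRA]
    exact ((((contAt_coreA hκ0 hρ0 hκq hσ1 h1 h2).mul
      (contAt_crossj hκ0 hρ0 hσ1 hσss hg1j k _ _)).mul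
      (contAt_crossi hκ0 hρ0 hσ1 hσss hgj1 k _ _)).mul
      (contAt_tauc hκ0 hρ0 hσ1 hτ0 hg1τ _ _)).mul continuousAt_const
  have hrb : ContinuousAt RB c := by
    rw [hRB]
    exact ((((contAt_coreB hκ0 hρ0 hκq hσ1 (by omega) (by omega)).mul
      (contAt_crossj hκ0 hρ0 hσ1 hσss hg1j k _ _)).mul
      (contAt_crossi hκ0 hρ0 hσ1 hσss hgj1 k _ _)).mul
      (contAt_tauc hκ0 hρ0 hσ1 hτ0 hg1τ _ _)).mul continuousAt_const
  have hzero : RA c - RB c = 0 := by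
    rw [hRA, hRB]
    simp only []
    rw [coreAB hκ0 hσ1 h1 h2 ha' hb',
      crossj_swap hκ0 h1 h2 ha' hb' k σ,
      crossi_swap hκ0 ha' hb' k σ,
      tauc_swap hκ0 h1 h2 ha' hb' σ τ]
    rw [sub_self]
  have hdiff : Tendsto (fun z => RA z - RB z) (𝓝[≠] c) (𝓝 0) := by
    have := ((hra.sub hrb).tendsto).mono_left
      (nhdsWithin_le_nhds (s := {c}ᶜ))
    rw [Pi.sub_apply, hzero] at this
    exact this
  simpa using hrat.mul hdiff

end Pair
end NP
namespace NP
variable {n : ℕ}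

def phi (p : ℤ) (k : Fin (n+2) → ℕ) : Fin (n+2) → ℕ := fun i =>
  if i = 0 then ((k 1:ℤ) - p).toNat else if i = 1 then ((k 0:ℤ) + p).toNat else k i

lemma phi_zero (p : ℤ) (k : Fin (n+2) → ℕ) : phi p k 0 = ((k 1:ℤ) - p).toNat := by
  simp [phi]

lemma phi_one (p : ℤ) (k : Fin (n+2) → ℕ) : phi p k 1 = ((k 0:ℤ) + p).toNat := by
  simp [phi]

lemma phi_ss (p : ℤ) (k : Fin (n+2) → ℕ) (j : Fin n) :
    phi p k j.succ.succ = k j.succ.succ := by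
  simp [phi]

lemma sum_univ_split (g : Fin (n+2) → ℕ) :
    ∑ i, g i = g 0 + (g 1 + ∑ i : Fin n, g i.succ.succ) := by
  rw [Fin.sum_univ_succ, Fin.sum_univ_succ, Fin.succ_zero_eq_one]

lemma phi_mem {p : ℤ} {K : ℕ} {k : Fin (n+2) → ℕ}
    (hk : k ∈ Finset.Nat.antidiagonalTuple (n+2) K)
    (h0 : 0 ≤ (k 1:ℤ) - p) (h1 : 0 ≤ (k 0:ℤ) + p) :
    phi p k ∈ Finset.Nat.antidiagonalTuple (n+2) K := by
  rw [Finset.Nat.mem_antidiagonalTuple] at hk ⊢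
  rw [sum_univ_split] at hk
  rw [sum_univ_split (phi p k)]
  simp only [phi_zero, phi_one]
  rw [Finset.sum_congr rfl fun j _ => phi_ss p k j]
  omega

lemma phi_invol {p : ℤ} {k : Fin (n+2) → ℕ}
    (h0 : 0 ≤ (k 1:ℤ) - p) (h1 : 0 ≤ (k 0:ℤ) + p) :
    phi p (phi p k) = k := by
  funext i
  rcases eq_or_ne i 0 with h | h
  · subst h
    rw [phi_zero, phi_one]
    omega
  · rcases eq_or_ne i 1 with h' | h'
    · subst h'
      rw [phi_one, phi_zero]
      omega
    · simp [phi, h, h']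

end NP


open NP

/-- The total residue of `∑_{|k|=K} X_k` at the diagonal `u_1 = q^p u_2` vanishes:
`(σ_1 − κ^p σ_2) ∑_{|k|=K} X_k → 0` as `σ_1 → κ^p σ_2`, i.e. the left-hand side of
the duality identity has no poles along the diagonals. -/
theorem X_sum_no_diagonal_pole (n K : ℕ) (p : ℤ) (κ ρ : ℂ)
    (hκ0 : κ ≠ 0) (hρ0 : ρ ≠ 0)
    (hκ : ∀ m : ℕ, 1 ≤ m → κ ^ (2 * m) ≠ 1)
    (σ τ : Fin (n + 2) → ℂ) (hσ : ∀ i : Fin (n + 2), i ≠ 0 → σ i ≠ 0)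
    (hτ : ∀ a, τ a ≠ 0)
    (hσσ : ∀ i j : Fin (n + 2), i ≠ 0 → j ≠ 0 → i < j →
      ∀ m : ℤ, (σ i) ^ 2 / (σ j) ^ 2 ≠ (κ ^ 2) ^ m)
    (hστ : ∀ j : Fin (n + 2), j ≠ 0 → ∀ a : Fin (n + 2),
      ∀ m : ℤ, (σ j) ^ 2 / (τ a) ^ 2 ≠ (κ ^ 2) ^ m) :
    Tendsto
      (fun z : ℂ => (z - κ ^ p * σ 1) *
        ∑ k ∈ Finset.Nat.antidiagonalTuple (n + 2) K,
          Xsum κ ρ k (Function.update σ 0 z) τ)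
      (𝓝[≠] (κ ^ p * σ 1)) (𝓝 0) := by
  classical
  have hσ1 : σ 1 ≠ 0 := hσ 1 one_ne_zero'
  have hκq := hq_ne_one hκ0 hκ
  have hσss : ∀ j : Fin n, σ j.succ.succ ≠ 0 := fun j => hσ _ (ss_ne_zero j)
  have h1lt : ∀ j : Fin n, (1 : Fin (n+2)) < j.succ.succ := by
    intro j
    rw [Fin.lt_def]
    simp [Fin.val_succ]
  have hg1j : ∀ j : Fin n, ∀ m : ℤ, (σ 1)^2/(σ j.succ.succ)^2 ≠ (κ^2)^m :=
    fun j => hσσ 1 j.succ.succ one_ne_zero' (ss_ne_zero j) (h1lt j)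
  have hgj1 : ∀ j : Fin n, ∀ m : ℤ, (σ j.succ.succ)^2/(σ 1)^2 ≠ (κ^2)^m := by
    intro j m
    have := gen_inv (hg1j j) m
    rwa [inv_div] at this
  have hg1τ : ∀ t : Fin (n+2), ∀ m : ℤ, (σ 1)^2/(τ t)^2 ≠ (κ^2)^m := hστ 1 one_ne_zero'
  set T := Finset.Nat.antidiagonalTuple (n + 2) K with hT
  set c := κ ^ p * σ 1 with hc
  set F : (Fin (n+2) → ℕ) → ℂ → ℂ :=
    fun k z => Xsum κ ρ k (Function.update σ 0 z) τ with hF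
  have hsum : ∀ f : (Fin (n+2) → ℕ) → ℂ,
      ∑ k ∈ T, f k
        = ∑ k ∈ T.filter (fun k => (k 1:ℤ) - k 0 < p ∧ p ≤ (k 1:ℤ)), f k
          + ∑ k ∈ T.filter (fun k => -(k 0:ℤ) ≤ p ∧ p ≤ (k 1:ℤ) - k 0 - 1), f k
          + ∑ k ∈ T.filter (fun k => ¬((k 1:ℤ) - k 0 < p ∧ p ≤ (k 1:ℤ))
              ∧ ¬(-(k 0:ℤ) ≤ p ∧ p ≤ (k 1:ℤ) - k 0 - 1)), f k := by
    intro f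
    have e1 := Finset.sum_filter_add_sum_filter_not T
      (fun k => (k 1:ℤ) - k 0 < p ∧ p ≤ (k 1:ℤ)) f
    have e2 := Finset.sum_filter_add_sum_filter_not
      (T.filter (fun k => ¬((k 1:ℤ) - k 0 < p ∧ p ≤ (k 1:ℤ))))
      (fun k => -(k 0:ℤ) ≤ p ∧ p ≤ (k 1:ℤ) - k 0 - 1) f
    rw [Finset.filter_filter, Finset.filter_filter] at e2
    have e3 : T.filter (fun k => ¬((k 1:ℤ) - k 0 < p ∧ p ≤ (k 1:ℤ))
          ∧ (-(k 0:ℤ) ≤ p ∧ p ≤ (k 1:ℤ) - k 0 - 1))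
        = T.filter (fun k => -(k 0:ℤ) ≤ p ∧ p ≤ (k 1:ℤ) - k 0 - 1) := by
      apply Finset.filter_congr
      intro k _
      constructor
      · tauto
      · intro h
        exact ⟨by omega, h⟩
    rw [e3] at e2
    rw [← e1, ← e2]
    ring
  have hbij : ∀ z : ℂ,
      ∑ k ∈ T.filter (fun k => -(k 0:ℤ) ≤ p ∧ p ≤ (k 1:ℤ) - k 0 - 1), F k z
      = ∑ k ∈ T.filter (fun k => (k 1:ℤ) - k 0 < p ∧ p ≤ (k 1:ℤ)), F (phi p k) z := by
    intro z
    refine Finset.sum_nbij' (fun k => phi p k) (fun k => phi p k) ?_ ?_ ?_ ?_ ?_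
    · intro k hk
      rw [Finset.mem_filter] at hk ⊢
      obtain ⟨hkT, hPB⟩ := hk
      refine ⟨phi_mem hkT (by omega) (by omega), ?_⟩
      rw [phi_zero, phi_one]
      omega
    · intro k hk
      rw [Finset.mem_filter] at hk ⊢
      obtain ⟨hkT, hPA⟩ := hk
      refine ⟨phi_mem hkT (by omega) (by omega), ?_⟩
      rw [phi_zero, phi_one]
      omega
    · intro k hk
      rw [Finset.mem_filter] at hk
      exact phi_invol (by omega) (by omega)
    · intro k hk
      rw [Finset.mem_filter] at hk
      exact phi_invol (by omega) (by omega)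
    · intro k hk
      rw [Finset.mem_filter] at hk
      rw [phi_invol (by omega) (by omega)]
  have heq : (fun z : ℂ => (z - c) * ∑ k ∈ T, F k z)
      = fun z => (∑ k ∈ T.filter (fun k => (k 1:ℤ) - k 0 < p ∧ p ≤ (k 1:ℤ)),
            (z - c) * (F k z + F (phi p k) z))
          + ∑ k ∈ T.filter (fun k => ¬((k 1:ℤ) - k 0 < p ∧ p ≤ (k 1:ℤ))
              ∧ ¬(-(k 0:ℤ) ≤ p ∧ p ≤ (k 1:ℤ) - k 0 - 1)), (z - c) * F k z := by
    funext z
    rw [hsum (fun k => F k z), hbij z, mul_add, mul_add, Finset.mul_sum, Finset.mul_sum,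
      Finset.mul_sum, ← Finset.sum_add_distrib]
    congr 1
    exact Finset.sum_congr rfl fun k _ => by ring
  rw [show (fun z : ℂ => (z - κ ^ p * σ 1) *
        ∑ k ∈ Finset.Nat.antidiagonalTuple (n + 2) K,
          Xsum κ ρ k (Function.update σ 0 z) τ) = (fun z : ℂ => (z - c) * ∑ k ∈ T, F k z)
      from rfl, heq]
  have t1 : Tendsto (fun z => ∑ k ∈ T.filter (fun k => (k 1:ℤ) - k 0 < p ∧ p ≤ (k 1:ℤ)),
      (z - c) * (F k z + F (phi p k) z)) (𝓝[≠] c)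
      (𝓝 (∑ _k ∈ T.filter (fun k => (k 1:ℤ) - k 0 < p ∧ p ≤ (k 1:ℤ)), (0:ℂ))) := by
    refine tendsto_finset_sum _ fun k hk => ?_
    rw [Finset.mem_filter] at hk
    exact pair_tendsto hκ0 hρ0 hκq hσ1 hσss hτ hg1j hgj1 hg1τ k (phi p k)
      hk.2.1 hk.2.2 (by rw [phi_zero]; omega) (by rw [phi_one]; omega)
      (fun j => phi_ss p k j)
  have t2 : Tendsto (fun z => ∑ k ∈ T.filter (fun k => ¬((k 1:ℤ) - k 0 < p ∧ p ≤ (k 1:ℤ))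
        ∧ ¬(-(k 0:ℤ) ≤ p ∧ p ≤ (k 1:ℤ) - k 0 - 1)), (z - c) * F k z) (𝓝[≠] c)
      (𝓝 (∑ _k ∈ T.filter (fun k => ¬((k 1:ℤ) - k 0 < p ∧ p ≤ (k 1:ℤ))
        ∧ ¬(-(k 0:ℤ) ≤ p ∧ p ≤ (k 1:ℤ) - k 0 - 1)), (0:ℂ))) := by
    refine tendsto_finset_sum _ fun k hk => ?_
    rw [Finset.mem_filter] at hk
    exact typeO_tendsto hκ0 hρ0 hκq hσ1 hσss hτ hg1j hgj1 hg1τ k hk.2.1 hk.2.2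
  have := t1.add t2
  simpa using this
end

section
/- Let n ≥ 1 and 0 ≤ r ≤ n be natural numbers, α ∈ ℂ, and x_1,…,x_n, y_1,…,y_n ∈ ℂ with x_i ≠ x_j and y_i ≠ y_j for i ≠ j and x_i ≠ y_a for all i, a. Then the rational kernel function identity holds: ∑_{I ⊆ {1,…,n}, |I| = r} ∏_{i ∈ I} ( ∏_{j ∉ I} (x_i − x_j − α)/(x_i − x_j) · ∏_{a=1}^n (x_i − y_a + α)/(x_i − y_a) ) = ∑_{A ⊆ {1,…,n}, |A| = r} ∏_{a ∈ A} ( ∏_{b ∉ A} (y_a − y_b + α)/(y_a − y_b) · ∏_{i=1}^n (x_i − y_a + α)/(x_i − y_a) ). -/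
open Finset Polynomial Matrix
namespace KernelAux
variable {n : ℕ}

noncomputable def vd (u : Fin n → ℂ) : ℂ := ∏ i, ∏ j ∈ Finset.Ioi i, (u j - u i)
noncomputable def wd (v : Fin n → ℂ) : ℂ := ∏ i, ∏ j ∈ Finset.Ioi i, (v i - v j)

lemma erase_eq_union (i : Fin n) : (univ : Finset (Fin n)).erase i = Finset.Ioi i ∪ Finset.Iio i := by
  ext j
  simp only [Finset.mem_erase, Finset.mem_univ, and_true, Finset.mem_union, Finset.mem_Ioi,
    Finset.mem_Iio]
  exact ⟨fun h => (lt_or_gt_of_ne h).symm.imp id id, fun h => h.elim (fun h => h.ne') fun h => h.ne⟩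

lemma prod_pair (F : Fin n → Fin n → ℂ) :
    ∏ i, ∏ j, F i j = (∏ i, F i i) * ∏ i, ∏ j ∈ Finset.Ioi i, (F i j * F j i) := by
  have h1 : ∀ i : Fin n, ∏ j, F i j
      = F i i * ((∏ j ∈ Finset.Ioi i, F i j) * ∏ j ∈ Finset.Iio i, F i j) := by
    intro i
    rw [← Finset.mul_prod_erase univ _ (mem_univ i), erase_eq_union,
      Finset.prod_union (Finset.disjoint_Ioi_Iio i)]
  have h2 : ∏ i, ∏ j ∈ Finset.Iio i, F i j = ∏ i, ∏ j ∈ Finset.Ioi i, F j i := by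
    refine Finset.prod_comm' ?_
    intro i j; simp [and_comm]
  calc ∏ i, ∏ j, F i j
      = ∏ i, (F i i * ((∏ j ∈ Finset.Ioi i, F i j) * ∏ j ∈ Finset.Iio i, F i j)) := by
        exact Finset.prod_congr rfl fun i _ => h1 i
    _ = (∏ i, F i i) * ((∏ i, ∏ j ∈ Finset.Ioi i, F i j) * ∏ i, ∏ j ∈ Finset.Iio i, F i j) := by
        rw [Finset.prod_mul_distrib, Finset.prod_mul_distrib]
    _ = (∏ i, F i i) * ∏ i, ∏ j ∈ Finset.Ioi i, (F i j * F j i) := by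
        rw [h2, ← Finset.prod_mul_distrib]
        congr 1
        exact Finset.prod_congr rfl fun i _ => (Finset.prod_mul_distrib).symm

lemma prod_sq_eq {F G : Fin n → Fin n → ℂ} (hF : ∀ i, F i i = 1) (hG : ∀ i, G i i = 1)
    (h : ∀ i j, F i j * F j i = G i j * G j i) :
    ∏ i, ∏ j, F i j = ∏ i, ∏ j, G i j := by
  rw [prod_pair F, prod_pair G]
  simp only [hF, hG, Finset.prod_const_one, one_mul]
  exact Finset.prod_congr rfl fun i _ => Finset.prod_congr rfl fun j _ => h i j

lemma Ioi_filter (i : Fin n) : Finset.Ioi i = univ.filter (fun j => i < j) := by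
  ext j; simp

/-- Splitting a product over ordered pairs into a cross product, for a symmetric
function which is 1 on same-side pairs. -/
lemma prod_Ioi_eq_cross (h : Fin n → Fin n → ℂ) (J : Finset (Fin n))
    (hsymm : ∀ i j, h i j = h j i)
    (hone : ∀ i j, i ≠ j → ((i ∈ J) ↔ (j ∈ J)) → h i j = 1) :
    ∏ i, ∏ j ∈ Finset.Ioi i, h i j = ∏ p ∈ J, ∏ q ∈ Jᶜ, h p q := by
  have hJ : J = univ.filter (· ∈ J) := by ext p; simp
  have hJc : Jᶜ = univ.filter (· ∈ Jᶜ) := by ext p; simp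
  have L : ∏ i, ∏ j ∈ Finset.Ioi i, h i j
      = ∏ i, ∏ j, (if i < j then h i j else 1) := by
    refine Finset.prod_congr rfl fun i _ => ?_
    rw [Ioi_filter, Finset.prod_filter]
  have R : ∏ p ∈ J, ∏ q ∈ Jᶜ, h p q
      = ∏ p, ∏ q, (if p ∈ J ∧ q ∈ Jᶜ then h p q else 1) := by
    have inner : ∀ p, (∏ q, (if p ∈ J ∧ q ∈ Jᶜ then h p q else 1))
        = if p ∈ J then ∏ q ∈ Jᶜ, h p q else 1 := by
      intro p
      by_cases hp : p ∈ J
      · simp only [hp, true_and, if_true]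
        rw [Finset.prod_ite_mem, Finset.univ_inter]
      · simp [hp]
    rw [Finset.prod_congr rfl fun p _ => inner p, Finset.prod_ite_mem, Finset.univ_inter]
  rw [L, R]
  clear hJ hJc
  refine prod_sq_eq (fun i => by simp) (fun i => by simp [Finset.mem_compl]) ?_
  intro i j
  rcases lt_trichotomy i j with hij | hij | hij
  · have : ¬ j < i := lt_asymm hij
    simp only [hij, if_true, this, if_false, mul_one]
    by_cases hiJ : i ∈ J <;> by_cases hjJ : j ∈ J
    · rw [hone i j hij.ne (by simp [hiJ, hjJ])]
      simp [hiJ, hjJ, Finset.mem_compl]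
    · simp only [hiJ, hjJ, Finset.mem_compl, true_and, and_true, not_false_iff, if_true,
        not_true, false_and, and_false, if_false, one_mul, mul_one]
    · simp only [hiJ, hjJ, Finset.mem_compl, false_and, if_false, one_mul, not_false_iff,
        true_and, and_true, not_true, if_true]
      exact hsymm i j
    · rw [hone i j hij.ne (by simp [hiJ, hjJ])]
      simp [hiJ, hjJ]
  · subst hij; simp
  · have : ¬ i < j := lt_asymm hij
    simp only [hij, if_true, this, if_false, one_mul]
    by_cases hiJ : i ∈ J <;> by_cases hjJ : j ∈ J
    · rw [hone j i hij.ne (by simp [hiJ, hjJ])]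
      simp [hiJ, hjJ, Finset.mem_compl]
    · simp only [hiJ, hjJ, Finset.mem_compl, true_and, and_true, not_false_iff, if_true,
        not_true, false_and, and_false, if_false, one_mul, mul_one]
      exact hsymm j i
    · simp only [hiJ, hjJ, Finset.mem_compl, false_and, if_false, one_mul, not_false_iff,
        true_and, and_true, not_true, if_true, mul_one]
    · rw [hone j i hij.ne (by simp [hiJ, hjJ])]
      simp [hiJ, hjJ]

lemma vd_def (u : Fin n → ℂ) : vd u = ∏ i, ∏ j ∈ Finset.Ioi i, (u j - u i) := rfl
lemma wd_def (v : Fin n → ℂ) : wd v = ∏ i, ∏ j ∈ Finset.Ioi i, (v i - v j) := rfl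

lemma vd_ne_zero {u : Fin n → ℂ} (hu : ∀ i j : Fin n, i ≠ j → u i ≠ u j) : vd u ≠ 0 := by
  rw [vd_def]
  refine Finset.prod_ne_zero_iff.2 fun i _ => Finset.prod_ne_zero_iff.2 fun j hj => ?_
  have : j ≠ i := (Finset.mem_Ioi.1 hj).ne'
  exact sub_ne_zero.2 (hu j i this)

lemma wd_ne_zero {v : Fin n → ℂ} (hv : ∀ i j : Fin n, i ≠ j → v i ≠ v j) : wd v ≠ 0 := by
  rw [wd_def]
  refine Finset.prod_ne_zero_iff.2 fun i _ => Finset.prod_ne_zero_iff.2 fun j hj => ?_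
  have : i ≠ j := (Finset.mem_Ioi.1 hj).ne
  exact sub_ne_zero.2 (hv i j this)

lemma wd_eq_zero {v : Fin n → ℂ} (a b : Fin n) (hab : a ≠ b) (hv : v a = v b) : wd v = 0 := by
  rcases lt_or_gt_of_ne hab with hlt | hlt
  · exact Finset.prod_eq_zero (Finset.mem_univ a)
      (Finset.prod_eq_zero (Finset.mem_Ioi.2 hlt) (by rw [hv, sub_self]))
  · exact Finset.prod_eq_zero (Finset.mem_univ b)
      (Finset.prod_eq_zero (Finset.mem_Ioi.2 hlt) (by rw [hv, sub_self]))

/-- Denominator-cleared Cauchy determinant identity, valid for all `u v`. -/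
lemma det_cauchy_cleared (u v : Fin n → ℂ) :
    (Matrix.of fun i j : Fin n => ∏ b ∈ univ.erase j, (u i - v b)).det = vd u * wd v := by
  classical
  by_cases hv : ∀ a b : Fin n, a ≠ b → v a ≠ v b
  · -- v has pairwise distinct values
    set Cm : Matrix (Fin n) (Fin n) ℂ :=
      Matrix.of fun k j => (∏ b ∈ univ.erase j, ((X : ℂ[X]) - C (v b))).coeff k with hCm
    have key : ∀ w : Fin n → ℂ,
        (Matrix.of fun i j : Fin n => ∏ b ∈ univ.erase j, (w i - v b))
          = (Matrix.vandermonde w) * Cm := by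
      intro w
      ext i j
      rw [Matrix.mul_apply]
      have hdeg : (∏ b ∈ univ.erase j, ((X : ℂ[X]) - C (v b))).natDegree < n := by
        refine lt_of_le_of_lt (Polynomial.natDegree_prod_le _ _) ?_
        simp only [Polynomial.natDegree_X_sub_C, Finset.sum_const, smul_eq_mul, mul_one]
        rw [Finset.card_erase_of_mem (Finset.mem_univ j), Finset.card_univ, Fintype.card_fin]
        exact Nat.sub_lt (Nat.pos_of_ne_zero (by rintro rfl; exact absurd j.2 (by simp))) one_pos
      have := Polynomial.eval_eq_sum_range' hdeg (w i)
      rw [Polynomial.eval_prod] at this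
      simp only [Polynomial.eval_sub, Polynomial.eval_X, Polynomial.eval_C] at this
      rw [Matrix.of_apply, this, ← Fin.sum_univ_eq_sum_range]
      refine Finset.sum_congr rfl fun k _ => ?_
      rw [mul_comm]
      rfl
    have hdet : ∀ w : Fin n → ℂ,
        (Matrix.of fun i j : Fin n => ∏ b ∈ univ.erase j, (w i - v b)).det
          = vd w * Cm.det := by
      intro w
      rw [key w, Matrix.det_mul, Matrix.det_vandermonde]
      rfl
    have hdiag : (Matrix.of fun i j : Fin n => ∏ b ∈ univ.erase j, (v i - v b))
        = Matrix.diagonal (fun i => ∏ b ∈ univ.erase i, (v i - v b)) := by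
      ext i j
      by_cases hij : i = j
      · subst hij; simp [Matrix.diagonal]
      · rw [Matrix.of_apply, Matrix.diagonal_apply_ne _ hij]
        exact Finset.prod_eq_zero (Finset.mem_erase.2 ⟨hij, Finset.mem_univ i⟩) (sub_self _)
    have hprod : ∏ i, ∏ b ∈ univ.erase i, (v i - v b) = wd v * vd v := by
      have : ∀ i : Fin n, ∏ b ∈ univ.erase i, (v i - v b)
          = (∏ b ∈ Finset.Ioi i, (v i - v b)) * ∏ b ∈ Finset.Iio i, (v i - v b) := by
        intro i
        rw [erase_eq_union, Finset.prod_union (Finset.disjoint_Ioi_Iio i)]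
      rw [Finset.prod_congr rfl fun i _ => this i, Finset.prod_mul_distrib]
      congr 1
      rw [vd_def]
      refine Finset.prod_comm' ?_
      intro i j; simp
    have hCd : Cm.det = wd v := by
      have h1 := hdet v
      rw [hdiag, Matrix.det_diagonal, hprod] at h1
      have h2 : vd v * Cm.det = vd v * wd v := by rw [← h1]; ring
      exact mul_left_cancel₀ (vd_ne_zero hv) h2
    rw [hdet u, hCd]
  · -- v has a repeated value
    push_neg at hv
    obtain ⟨a, b, hab, hvab⟩ := hv
    have hdet0 : (Matrix.of fun i j : Fin n => ∏ b ∈ univ.erase j, (u i - v b)).det = 0 := by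
      refine Matrix.det_zero_of_column_eq hab fun k => ?_
      simp only [Matrix.of_apply]
      rw [← Finset.mul_prod_erase _ _ (Finset.mem_erase.2 ⟨hab.symm, Finset.mem_univ b⟩),
        ← Finset.mul_prod_erase _ _ (Finset.mem_erase.2 ⟨hab, Finset.mem_univ a⟩),
        Finset.erase_right_comm, hvab]
    rw [hdet0, wd_eq_zero a b hab hvab, mul_zero]

/-- The Cauchy determinant. -/
noncomputable def cd (u v : Fin n → ℂ) : ℂ := (Matrix.of fun i j : Fin n => (u i - v j)⁻¹).det

lemma cd_eq (u v : Fin n → ℂ) (h : ∀ i j, u i ≠ v j) :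
    cd u v = vd u * wd v / ∏ i, ∏ j, (u i - v j) := by
  have hne : ∀ i j, u i - v j ≠ 0 := fun i j => sub_ne_zero.2 (h i j)
  have hP : (∏ i, ∏ j, (u i - v j)) ≠ 0 :=
    Finset.prod_ne_zero_iff.2 fun i _ => Finset.prod_ne_zero_iff.2 fun j _ => hne i j
  have key : (Matrix.of fun i j : Fin n => ∏ b ∈ univ.erase j, (u i - v b))
      = Matrix.of fun i j : Fin n => (∏ b, (u i - v b)) * (u i - v j)⁻¹ := by
    ext i j
    rw [Matrix.of_apply, Matrix.of_apply, ← Finset.mul_prod_erase univ _ (Finset.mem_univ j),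
      mul_comm (u i - v j), mul_assoc, mul_inv_cancel₀ (hne i j), mul_one]
  have h2 := det_cauchy_cleared u v
  rw [key] at h2
  have h3 := Matrix.det_mul_column (fun i => ∏ b, (u i - v b)) (Matrix.of fun i j => (u i - v j)⁻¹)
  simp only [Matrix.of_apply] at h3
  rw [h3] at h2
  rw [eq_div_iff hP, ← h2, cd, mul_comm]

/-- Multilinear expansion of a determinant of a sum, graded by subsets of columns. -/
lemma det_add_expand_col (t : ℂ) (A B : Matrix (Fin n) (Fin n) ℂ) :
    (Matrix.of fun i j : Fin n => A i j + t * B i j).det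
      = ∑ I : Finset (Fin n), t ^ I.card *
          (Matrix.of fun i j : Fin n => if j ∈ I then B i j else A i j).det := by
  classical
  simp only [Matrix.det_apply]
  have main : ∀ σ : Equiv.Perm (Fin n),
      ∏ i, (Matrix.of fun i j : Fin n => A i j + t * B i j) (σ i) i
        = ∑ I : Finset (Fin n), t ^ I.card *
            ∏ i, (Matrix.of fun i j : Fin n => if j ∈ I then B i j else A i j) (σ i) i := by
    intro σ
    simp only [Matrix.of_apply]
    have hcomm : ∀ i : Fin n, A (σ i) i + t * B (σ i) i = t * B (σ i) i + A (σ i) i :=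
      fun i => add_comm _ _
    rw [Finset.prod_congr rfl fun i _ => hcomm i, Finset.prod_add, Finset.powerset_univ]
    refine Finset.sum_congr rfl fun I _ => ?_
    have hf1 : univ.filter (fun x => x ∈ I) = I := by ext p; simp
    have hf2 : univ.filter (fun x => x ∉ I) = univ \ I := by ext p; simp
    have hite : ∏ i, (if i ∈ I then B (σ i) i else A (σ i) i)
        = (∏ i ∈ I, B (σ i) i) * ∏ i ∈ univ \ I, A (σ i) i := by
      rw [Finset.prod_ite, hf1, hf2]
    rw [hite, Finset.prod_mul_distrib, Finset.prod_const]
    ring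
  have step : ∑ σ : Equiv.Perm (Fin n),
      Equiv.Perm.sign σ • ∏ i, (Matrix.of fun i j : Fin n => A i j + t * B i j) (σ i) i
      = ∑ σ : Equiv.Perm (Fin n), ∑ I : Finset (Fin n), t ^ I.card *
          (Equiv.Perm.sign σ • ∏ i,
            (Matrix.of fun i j : Fin n => if j ∈ I then B i j else A i j) (σ i) i) := by
    refine Finset.sum_congr rfl fun σ _ => ?_
    rw [main σ, Finset.smul_sum]
    exact Finset.sum_congr rfl fun I _ => (mul_smul_comm _ _ _).symm
  rw [step, Finset.sum_comm]
  exact Finset.sum_congr rfl fun I _ => (Finset.mul_sum _ _ _).symm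

/-- Multilinear expansion of a determinant of a sum, graded by subsets of rows. -/
lemma det_add_expand_row (t : ℂ) (A B : Matrix (Fin n) (Fin n) ℂ) :
    (Matrix.of fun i j : Fin n => A i j + t * B i j).det
      = ∑ I : Finset (Fin n), t ^ I.card *
          (Matrix.of fun i j : Fin n => if i ∈ I then B i j else A i j).det := by
  have h := det_add_expand_col t Aᵀ Bᵀ
  have e1 : (Matrix.of fun i j : Fin n => Aᵀ i j + t * Bᵀ i j)
      = (Matrix.of fun i j : Fin n => A i j + t * B i j)ᵀ := by
    ext i j; simp [Matrix.transpose_apply]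
  have e2 : ∀ I : Finset (Fin n), (Matrix.of fun i j : Fin n => if j ∈ I then Bᵀ i j else Aᵀ i j)
      = (Matrix.of fun i j : Fin n => if i ∈ I then B i j else A i j)ᵀ := by
    intro I; ext i j; simp [Matrix.transpose_apply]
  rw [e1, Matrix.det_transpose] at h
  rw [h]
  exact Finset.sum_congr rfl fun I _ => by rw [e2 I, Matrix.det_transpose]

noncomputable def xs (x : Fin n → ℂ) (α : ℂ) (I : Finset (Fin n)) : Fin n → ℂ :=
  fun i => x i + if i ∈ I then α else 0

noncomputable def ys (y : Fin n → ℂ) (α : ℂ) (A : Finset (Fin n)) : Fin n → ℂ :=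
  fun a => y a - if a ∈ A then α else 0

lemma star (α : ℂ) (x y : Fin n → ℂ) (r : ℕ) :
    ∑ I ∈ Finset.powersetCard r (univ : Finset (Fin n)), cd (xs x α I) y
      = ∑ A ∈ Finset.powersetCard r (univ : Finset (Fin n)), cd x (ys y α A) := by
  classical
  have hall : ∀ t : ℂ, ∑ I : Finset (Fin n), t ^ I.card * cd (xs x α I) y
      = ∑ A : Finset (Fin n), t ^ A.card * cd x (ys y α A) := by
    intro t
    have hrow := det_add_expand_row t (Matrix.of fun i a : Fin n => (x i - y a)⁻¹)
      (Matrix.of fun i a : Fin n => (x i + α - y a)⁻¹)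
    have hcol := det_add_expand_col t (Matrix.of fun i a : Fin n => (x i - y a)⁻¹)
      (Matrix.of fun i a : Fin n => (x i + α - y a)⁻¹)
    have erow : ∀ I : Finset (Fin n),
        (Matrix.of fun i a : Fin n => if i ∈ I
            then (Matrix.of fun i a : Fin n => (x i + α - y a)⁻¹) i a
            else (Matrix.of fun i a : Fin n => (x i - y a)⁻¹) i a)
          = Matrix.of fun i a : Fin n => (xs x α I i - y a)⁻¹ := by
      intro I; ext i a
      by_cases hi : i ∈ I <;> simp [hi, xs]
    have ecol : ∀ A : Finset (Fin n),
        (Matrix.of fun i a : Fin n => if a ∈ A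
            then (Matrix.of fun i a : Fin n => (x i + α - y a)⁻¹) i a
            else (Matrix.of fun i a : Fin n => (x i - y a)⁻¹) i a)
          = Matrix.of fun i a : Fin n => (x i - ys y α A a)⁻¹ := by
      intro A; ext i a
      by_cases ha : a ∈ A <;> simp [ha, ys] <;> ring_nf
    rw [hcol] at hrow
    calc ∑ I : Finset (Fin n), t ^ I.card * cd (xs x α I) y
        = ∑ I : Finset (Fin n), t ^ I.card *
            (Matrix.of fun i a : Fin n => if i ∈ I
              then (Matrix.of fun i a : Fin n => (x i + α - y a)⁻¹) i a
              else (Matrix.of fun i a : Fin n => (x i - y a)⁻¹) i a).det := by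
          refine Finset.sum_congr rfl fun I _ => ?_
          rw [erow I]; rfl
      _ = ∑ A : Finset (Fin n), t ^ A.card *
            (Matrix.of fun i a : Fin n => if a ∈ A
              then (Matrix.of fun i a : Fin n => (x i + α - y a)⁻¹) i a
              else (Matrix.of fun i a : Fin n => (x i - y a)⁻¹) i a).det := hrow.symm
      _ = ∑ A : Finset (Fin n), t ^ A.card * cd x (ys y α A) := by
          refine Finset.sum_congr rfl fun A _ => ?_
          rw [ecol A]; rfl
  have hPQ : (∑ I : Finset (Fin n), Polynomial.C (cd (xs x α I) y) * X ^ I.card)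
      = ∑ A : Finset (Fin n), Polynomial.C (cd x (ys y α A)) * X ^ A.card := by
    refine Polynomial.funext fun t => ?_
    simp only [Polynomial.eval_finset_sum, Polynomial.eval_mul, Polynomial.eval_pow,
      Polynomial.eval_C, Polynomial.eval_X]
    calc ∑ I : Finset (Fin n), cd (xs x α I) y * t ^ I.card
        = ∑ I : Finset (Fin n), t ^ I.card * cd (xs x α I) y := by
          exact Finset.sum_congr rfl fun I _ => mul_comm _ _
      _ = ∑ A : Finset (Fin n), t ^ A.card * cd x (ys y α A) := hall t
      _ = ∑ A : Finset (Fin n), cd x (ys y α A) * t ^ A.card := by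
          exact Finset.sum_congr rfl fun A _ => mul_comm _ _
  have hco := congrArg (fun p : Polynomial ℂ => p.coeff r) hPQ
  simp only [Polynomial.finset_sum_coeff, Polynomial.coeff_C_mul, Polynomial.coeff_X_pow,
    mul_ite, mul_one, mul_zero] at hco
  have conv1 : ∀ (f : Finset (Fin n) → ℂ),
      (∑ I : Finset (Fin n), if r = I.card then f I else 0)
        = ∑ I ∈ Finset.powersetCard r (univ : Finset (Fin n)), f I := by
    intro f
    rw [Finset.powersetCard_eq_filter, Finset.powerset_univ, Finset.sum_filter]
    exact Finset.sum_congr rfl fun I _ => by simp [eq_comm]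
  rw [conv1, conv1] at hco
  exact hco

lemma vd_shift (x : Fin n → ℂ) (hx : ∀ i j : Fin n, i ≠ j → x i ≠ x j) (α : ℂ)
    (J : Finset (Fin n)) :
    vd (xs x α Jᶜ) = vd x * ∏ p ∈ J, ∏ q ∈ Jᶜ, ((x p - x q - α) / (x p - x q)) := by
  classical
  set h : Fin n → Fin n → ℂ := fun i j => (xs x α Jᶜ j - xs x α Jᶜ i) / (x j - x i) with hh
  have hsymm : ∀ i j, h i j = h j i := by
    intro i j
    rw [hh]
    dsimp only
    rw [show xs x α Jᶜ i - xs x α Jᶜ j = -(xs x α Jᶜ j - xs x α Jᶜ i) by ring,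
      show x i - x j = -(x j - x i) by ring, neg_div_neg_eq]
  have hone : ∀ i j : Fin n, i ≠ j → ((i ∈ J) ↔ (j ∈ J)) → h i j = 1 := by
    intro i j hij hmem
    have hsame : xs x α Jᶜ j - xs x α Jᶜ i = x j - x i := by
      by_cases hi : i ∈ Jᶜ
      · have hj : j ∈ Jᶜ := by
          simp only [Finset.mem_compl] at hi ⊢
          exact fun hjJ => hi (hmem.2 hjJ)
        simp only [xs, hi, hj, if_true]
        ring
      · have hj : j ∉ Jᶜ := by
          simp only [Finset.mem_compl, not_not] at hi ⊢
          exact hmem.1 hi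
        simp only [xs, hi, hj, if_false]
        ring
    rw [hh]
    dsimp only
    rw [hsame, div_self (sub_ne_zero.2 (hx j i (Ne.symm hij)))]
  have key : ∀ p q : Fin n, p ∈ J → q ∈ Jᶜ → h p q = (x p - x q - α) / (x p - x q) := by
    intro p q hp hq
    have hp' : p ∉ Jᶜ := by simp [Finset.mem_compl, hp]
    rw [hh]
    dsimp only
    have h1 : xs x α Jᶜ q - xs x α Jᶜ p = x q + α - x p := by
      simp only [xs, hq, hp', if_true, if_false]
      ring
    rw [h1, show x q + α - x p = -(x p - x q - α) by ring,
      show x q - x p = -(x p - x q) by ring, neg_div_neg_eq]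
  have expand : vd (xs x α Jᶜ) = vd x * ∏ i, ∏ j ∈ Finset.Ioi i, h i j := by
    rw [vd_def, vd_def, ← Finset.prod_mul_distrib]
    refine Finset.prod_congr rfl fun i _ => ?_
    rw [← Finset.prod_mul_distrib]
    refine Finset.prod_congr rfl fun j hj => ?_
    have hne : x j - x i ≠ 0 := sub_ne_zero.2 (hx j i (Finset.mem_Ioi.1 hj).ne')
    rw [hh]
    dsimp only
    rw [mul_div_cancel₀ _ hne]
  rw [expand, prod_Ioi_eq_cross h J hsymm hone]
  congr 1
  exact Finset.prod_congr rfl fun p hp => Finset.prod_congr rfl fun q hq => key p q hp hq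

lemma wd_shift (y : Fin n → ℂ) (hy : ∀ i j : Fin n, i ≠ j → y i ≠ y j) (α : ℂ)
    (B : Finset (Fin n)) :
    wd (ys y α Bᶜ) = wd y * ∏ p ∈ B, ∏ q ∈ Bᶜ, ((y p - y q + α) / (y p - y q)) := by
  classical
  set h : Fin n → Fin n → ℂ := fun i j => (ys y α Bᶜ i - ys y α Bᶜ j) / (y i - y j) with hh
  have hsymm : ∀ i j, h i j = h j i := by
    intro i j
    rw [hh]
    dsimp only
    rw [show ys y α Bᶜ j - ys y α Bᶜ i = -(ys y α Bᶜ i - ys y α Bᶜ j) by ring,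
      show y j - y i = -(y i - y j) by ring, neg_div_neg_eq]
  have hone : ∀ i j : Fin n, i ≠ j → ((i ∈ B) ↔ (j ∈ B)) → h i j = 1 := by
    intro i j hij hmem
    have hsame : ys y α Bᶜ i - ys y α Bᶜ j = y i - y j := by
      by_cases hi : i ∈ Bᶜ
      · have hj : j ∈ Bᶜ := by
          simp only [Finset.mem_compl] at hi ⊢
          exact fun hjB => hi (hmem.2 hjB)
        simp only [ys, hi, hj, if_true]
        ring
      · have hj : j ∉ Bᶜ := by
          simp only [Finset.mem_compl, not_not] at hi ⊢
          exact hmem.1 hi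
        simp only [ys, hi, hj, if_false]
        ring
    rw [hh]
    dsimp only
    rw [hsame, div_self (sub_ne_zero.2 (hy i j hij))]
  have key : ∀ p q : Fin n, p ∈ B → q ∈ Bᶜ → h p q = (y p - y q + α) / (y p - y q) := by
    intro p q hp hq
    have hp' : p ∉ Bᶜ := by simp [Finset.mem_compl, hp]
    rw [hh]
    dsimp only
    have h1 : ys y α Bᶜ p - ys y α Bᶜ q = y p - y q + α := by
      simp only [ys, hq, hp', if_true, if_false]
      ring
    rw [h1]
  have expand : wd (ys y α Bᶜ) = wd y * ∏ i, ∏ j ∈ Finset.Ioi i, h i j := by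
    rw [wd_def, wd_def, ← Finset.prod_mul_distrib]
    refine Finset.prod_congr rfl fun i _ => ?_
    rw [← Finset.prod_mul_distrib]
    refine Finset.prod_congr rfl fun j hj => ?_
    have hne : y i - y j ≠ 0 := sub_ne_zero.2 (hy i j (Finset.mem_Ioi.1 hj).ne)
    rw [hh]
    dsimp only
    rw [mul_div_cancel₀ _ hne]
  rw [expand, prod_Ioi_eq_cross h B hsymm hone]
  congr 1
  exact Finset.prod_congr rfl fun p hp => Finset.prod_congr rfl fun q hq => key p q hp hq

section Claims

variable {α : ℂ} {x y : Fin n → ℂ}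

lemma claimA (hx : ∀ i j : Fin n, i ≠ j → x i ≠ x j) (hy : ∀ i j : Fin n, i ≠ j → y i ≠ y j)
    (hxy : ∀ i a : Fin n, x i ≠ y a) (hα : ∀ i a : Fin n, x i - y a + α ≠ 0)
    (J : Finset (Fin n)) :
    ∏ p ∈ J, ((∏ q ∈ Jᶜ, (x p - x q - α) / (x p - x q)) * ∏ a, (x p - y a + α) / (x p - y a))
      = ((∏ i, ∏ a, (x i - y a + α)) / (vd x * wd y)) * cd (xs x α Jᶜ) y := by
  classical
  have hcd : cd (xs x α Jᶜ) y
      = vd (xs x α Jᶜ) * wd y / ∏ i, ∏ a, (xs x α Jᶜ i - y a) := by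
    refine cd_eq _ _ fun i a => ?_
    by_cases hi : i ∈ Jᶜ
    · simp only [xs, hi, if_true]
      intro hcon
      exact hα i a (by rw [← hcon]; ring)
    · simp only [xs, hi, if_false]
      rw [add_zero]
      exact hxy i a
  have hsplit1 : ∏ i, ∏ a, (xs x α Jᶜ i - y a)
      = (∏ p ∈ J, ∏ a, (x p - y a)) * ∏ q ∈ Jᶜ, ∏ a, (x q - y a + α) := by
    rw [← Finset.prod_mul_prod_compl J (fun i => ∏ a, (xs x α Jᶜ i - y a))]
    congr 1
    · refine Finset.prod_congr rfl fun p hp => Finset.prod_congr rfl fun a _ => ?_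
      have hp' : p ∉ Jᶜ := by simp [Finset.mem_compl, hp]
      simp only [xs, hp', if_false]
      ring
    · refine Finset.prod_congr rfl fun q hq => Finset.prod_congr rfl fun a _ => ?_
      simp only [xs, hq, if_true]
      ring
  have hsplit2 : ∏ i, ∏ a, (x i - y a + α)
      = (∏ p ∈ J, ∏ a, (x p - y a + α)) * ∏ q ∈ Jᶜ, ∏ a, (x q - y a + α) :=
    (Finset.prod_mul_prod_compl J _).symm
  have hlhs : ∏ p ∈ J, ((∏ q ∈ Jᶜ, (x p - x q - α) / (x p - x q)) * ∏ a, (x p - y a + α) / (x p - y a))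
      = ((∏ p ∈ J, ∏ q ∈ Jᶜ, (x p - x q - α)) / (∏ p ∈ J, ∏ q ∈ Jᶜ, (x p - x q)))
        * ((∏ p ∈ J, ∏ a, (x p - y a + α)) / (∏ p ∈ J, ∏ a, (x p - y a))) := by
    rw [Finset.prod_mul_distrib]
    congr 1
    · rw [← Finset.prod_div_distrib]
      exact Finset.prod_congr rfl fun p _ => Finset.prod_div_distrib _ _
    · rw [← Finset.prod_div_distrib]
      exact Finset.prod_congr rfl fun p _ => Finset.prod_div_distrib _ _
  have hvds : vd (xs x α Jᶜ)
      = vd x * ((∏ p ∈ J, ∏ q ∈ Jᶜ, (x p - x q - α)) / (∏ p ∈ J, ∏ q ∈ Jᶜ, (x p - x q))) := by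
    rw [vd_shift x hx α J]
    congr 1
    rw [← Finset.prod_div_distrib]
    exact Finset.prod_congr rfl fun p _ => Finset.prod_div_distrib _ _
  rw [hcd, hsplit1, hsplit2, hlhs, hvds]
  have hCRd : (∏ p ∈ J, ∏ q ∈ Jᶜ, (x p - x q)) ≠ 0 := by
    refine Finset.prod_ne_zero_iff.2 fun p hp => Finset.prod_ne_zero_iff.2 fun q hq => ?_
    have : p ≠ q := fun h => (Finset.mem_compl.1 hq) (h ▸ hp)
    exact sub_ne_zero.2 (hx p q this)
  have hDJ : (∏ p ∈ J, ∏ a, (x p - y a)) ≠ 0 :=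
    Finset.prod_ne_zero_iff.2 fun p _ => Finset.prod_ne_zero_iff.2 fun a _ =>
      sub_ne_zero.2 (hxy p a)
  have hNJc : (∏ q ∈ Jᶜ, ∏ a, (x q - y a + α)) ≠ 0 :=
    Finset.prod_ne_zero_iff.2 fun q _ => Finset.prod_ne_zero_iff.2 fun a _ => hα q a
  have hvx : vd x ≠ 0 := vd_ne_zero hx
  have hwy : wd y ≠ 0 := wd_ne_zero hy
  generalize (∏ p ∈ J, ∏ q ∈ Jᶜ, (x p - x q - α)) = crn at *
  generalize hg1 : (∏ p ∈ J, ∏ q ∈ Jᶜ, (x p - x q)) = crd at *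
  generalize hg2 : (∏ p ∈ J, ∏ a, (x p - y a + α)) = nj at *
  generalize hg3 : (∏ p ∈ J, ∏ a, (x p - y a)) = dj at *
  generalize hg4 : (∏ q ∈ Jᶜ, ∏ a, (x q - y a + α)) = njc at *
  field_simp

lemma claimB (hx : ∀ i j : Fin n, i ≠ j → x i ≠ x j) (hy : ∀ i j : Fin n, i ≠ j → y i ≠ y j)
    (hxy : ∀ i a : Fin n, x i ≠ y a) (hα : ∀ i a : Fin n, x i - y a + α ≠ 0)
    (B : Finset (Fin n)) :
    ∏ b ∈ B, ((∏ a ∈ Bᶜ, (y b - y a + α) / (y b - y a)) * ∏ i, (x i - y b + α) / (x i - y b))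
      = ((∏ i, ∏ a, (x i - y a + α)) / (vd x * wd y)) * cd x (ys y α Bᶜ) := by
  classical
  have hcd : cd x (ys y α Bᶜ)
      = vd x * wd (ys y α Bᶜ) / ∏ i, ∏ a, (x i - ys y α Bᶜ a) := by
    refine cd_eq _ _ fun i a => ?_
    by_cases ha : a ∈ Bᶜ
    · simp only [ys, ha, if_true]
      intro hcon
      exact hα i a (by rw [hcon]; ring)
    · simp only [ys, ha, if_false]
      rw [sub_zero]
      exact hxy i a
  have hswap : ∏ i, ∏ a, (x i - ys y α Bᶜ a) = ∏ a, ∏ i, (x i - ys y α Bᶜ a) :=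
    Finset.prod_comm
  have hsplit1 : ∏ a, ∏ i, (x i - ys y α Bᶜ a)
      = (∏ b ∈ B, ∏ i, (x i - y b)) * ∏ a ∈ Bᶜ, ∏ i, (x i - y a + α) := by
    rw [← Finset.prod_mul_prod_compl B (fun a => ∏ i, (x i - ys y α Bᶜ a))]
    congr 1
    · refine Finset.prod_congr rfl fun b hb => Finset.prod_congr rfl fun i _ => ?_
      have hb' : b ∉ Bᶜ := by simp [Finset.mem_compl, hb]
      simp only [ys, hb', if_false]
      ring
    · refine Finset.prod_congr rfl fun a ha => Finset.prod_congr rfl fun i _ => ?_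
      simp only [ys, ha, if_true]
      ring
  have hsplit2 : ∏ i, ∏ a, (x i - y a + α)
      = (∏ b ∈ B, ∏ i, (x i - y b + α)) * ∏ a ∈ Bᶜ, ∏ i, (x i - y a + α) := by
    rw [Finset.prod_comm]
    exact (Finset.prod_mul_prod_compl B _).symm
  have hlhs : ∏ b ∈ B, ((∏ a ∈ Bᶜ, (y b - y a + α) / (y b - y a)) * ∏ i, (x i - y b + α) / (x i - y b))
      = ((∏ b ∈ B, ∏ a ∈ Bᶜ, (y b - y a + α)) / (∏ b ∈ B, ∏ a ∈ Bᶜ, (y b - y a)))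
        * ((∏ b ∈ B, ∏ i, (x i - y b + α)) / (∏ b ∈ B, ∏ i, (x i - y b))) := by
    rw [Finset.prod_mul_distrib]
    congr 1
    · rw [← Finset.prod_div_distrib]
      exact Finset.prod_congr rfl fun p _ => Finset.prod_div_distrib _ _
    · rw [← Finset.prod_div_distrib]
      exact Finset.prod_congr rfl fun p _ => Finset.prod_div_distrib _ _
  have hwds : wd (ys y α Bᶜ)
      = wd y * ((∏ b ∈ B, ∏ a ∈ Bᶜ, (y b - y a + α)) / (∏ b ∈ B, ∏ a ∈ Bᶜ, (y b - y a))) := by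
    rw [wd_shift y hy α B]
    congr 1
    rw [← Finset.prod_div_distrib]
    exact Finset.prod_congr rfl fun p _ => Finset.prod_div_distrib _ _
  rw [hcd, hswap, hsplit1, hsplit2, hlhs, hwds]
  have hCRd : (∏ b ∈ B, ∏ a ∈ Bᶜ, (y b - y a)) ≠ 0 := by
    refine Finset.prod_ne_zero_iff.2 fun p hp => Finset.prod_ne_zero_iff.2 fun q hq => ?_
    have : p ≠ q := fun h => (Finset.mem_compl.1 hq) (h ▸ hp)
    exact sub_ne_zero.2 (hy p q this)
  have hDB : (∏ b ∈ B, ∏ i, (x i - y b)) ≠ 0 :=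
    Finset.prod_ne_zero_iff.2 fun b _ => Finset.prod_ne_zero_iff.2 fun i _ =>
      sub_ne_zero.2 (hxy i b)
  have hNBc : (∏ a ∈ Bᶜ, ∏ i, (x i - y a + α)) ≠ 0 :=
    Finset.prod_ne_zero_iff.2 fun a _ => Finset.prod_ne_zero_iff.2 fun i _ => hα i a
  have hvx : vd x ≠ 0 := vd_ne_zero hx
  have hwy : wd y ≠ 0 := wd_ne_zero hy
  generalize (∏ b ∈ B, ∏ a ∈ Bᶜ, (y b - y a + α)) = crn at *
  generalize hg1 : (∏ b ∈ B, ∏ a ∈ Bᶜ, (y b - y a)) = crd at *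
  generalize hg2 : (∏ b ∈ B, ∏ i, (x i - y b + α)) = nb at *
  generalize hg3 : (∏ b ∈ B, ∏ i, (x i - y b)) = db at *
  generalize hg4 : (∏ a ∈ Bᶜ, ∏ i, (x i - y a + α)) = nbc at *
  field_simp

end Claims

lemma sum_compl_bij (f : Finset (Fin n) → ℂ) (r : ℕ) (hr : r ≤ n) :
    ∑ J ∈ Finset.powersetCard r (univ : Finset (Fin n)), f Jᶜ
      = ∑ I ∈ Finset.powersetCard (n - r) (univ : Finset (Fin n)), f I := by
  classical
  refine Finset.sum_nbij' (fun J => Jᶜ) (fun I => Iᶜ) ?_ ?_ ?_ ?_ ?_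
  · intro J hJ
    rw [Finset.mem_powersetCard] at hJ ⊢
    refine ⟨Finset.subset_univ _, ?_⟩
    rw [Finset.card_compl, hJ.2, Fintype.card_fin]
  · intro I hI
    rw [Finset.mem_powersetCard] at hI ⊢
    refine ⟨Finset.subset_univ _, ?_⟩
    rw [Finset.card_compl, hI.2, Fintype.card_fin, Nat.sub_sub_self hr]
  · intro J _; exact compl_compl J
  · intro I _; exact compl_compl I
  · intro J _; rfl

/-- The rational kernel function identity, under the genericity assumption
`x i - y a + α ≠ 0`. -/
lemma main (r : ℕ) (hr : r ≤ n) {α : ℂ} {x y : Fin n → ℂ}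
    (hx : ∀ i j : Fin n, i ≠ j → x i ≠ x j) (hy : ∀ i j : Fin n, i ≠ j → y i ≠ y j)
    (hxy : ∀ i a : Fin n, x i ≠ y a) (hα : ∀ i a : Fin n, x i - y a + α ≠ 0) :
    ∑ I ∈ Finset.powersetCard r (Finset.univ : Finset (Fin n)),
      ∏ i ∈ I, ((∏ j ∈ Iᶜ, (x i - x j - α) / (x i - x j)) * ∏ a, (x i - y a + α) / (x i - y a))
    = ∑ A ∈ Finset.powersetCard r (Finset.univ : Finset (Fin n)),
      ∏ a ∈ A, ((∏ b ∈ Aᶜ, (y a - y b + α) / (y a - y b)) * ∏ i, (x i - y a + α) / (x i - y a)) := by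
  classical
  set c : ℂ := (∏ i, ∏ a, (x i - y a + α)) / (vd x * wd y) with hc
  calc ∑ I ∈ Finset.powersetCard r (Finset.univ : Finset (Fin n)),
      ∏ i ∈ I, ((∏ j ∈ Iᶜ, (x i - x j - α) / (x i - x j)) * ∏ a, (x i - y a + α) / (x i - y a))
      = ∑ J ∈ Finset.powersetCard r (Finset.univ : Finset (Fin n)), c * cd (xs x α Jᶜ) y :=
        Finset.sum_congr rfl fun J _ => claimA hx hy hxy hα J
    _ = c * ∑ J ∈ Finset.powersetCard r (Finset.univ : Finset (Fin n)), cd (xs x α Jᶜ) y :=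
        (Finset.mul_sum _ _ _).symm
    _ = c * ∑ I ∈ Finset.powersetCard (n - r) (Finset.univ : Finset (Fin n)), cd (xs x α I) y := by
        rw [sum_compl_bij (fun I => cd (xs x α I) y) r hr]
    _ = c * ∑ A ∈ Finset.powersetCard (n - r) (Finset.univ : Finset (Fin n)), cd x (ys y α A) := by
        rw [star α x y (n - r)]
    _ = c * ∑ B ∈ Finset.powersetCard r (Finset.univ : Finset (Fin n)), cd x (ys y α Bᶜ) := by
        rw [sum_compl_bij (fun A => cd x (ys y α A)) r hr]
    _ = ∑ B ∈ Finset.powersetCard r (Finset.univ : Finset (Fin n)), c * cd x (ys y α Bᶜ) :=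
        Finset.mul_sum _ _ _
    _ = ∑ A ∈ Finset.powersetCard r (Finset.univ : Finset (Fin n)),
        ∏ a ∈ A, ((∏ b ∈ Aᶜ, (y a - y b + α) / (y a - y b)) * ∏ i, (x i - y a + α) / (x i - y a)) :=
        Finset.sum_congr rfl fun B _ => (claimB hx hy hxy hα B).symm

end KernelAux


open KernelAux in
/-- The rational kernel function identity (Kajihara–Noumi, rational case `s(z) = z`). -/
theorem rational_kernel_function_identity (n r : ℕ) (hn : 1 ≤ n) (hr : r ≤ n)
    (α : ℂ) (x y : Fin n → ℂ)
    (hx : ∀ i j : Fin n, i ≠ j → x i ≠ x j)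
    (hy : ∀ i j : Fin n, i ≠ j → y i ≠ y j)
    (hxy : ∀ i a : Fin n, x i ≠ y a) :
    ∑ I ∈ Finset.powersetCard r (Finset.univ : Finset (Fin n)),
      ∏ i ∈ I,
        ((∏ j ∈ Iᶜ, (x i - x j - α) / (x i - x j)) *
         ∏ a, (x i - y a + α) / (x i - y a))
    = ∑ A ∈ Finset.powersetCard r (Finset.univ : Finset (Fin n)),
      ∏ a ∈ A,
        ((∏ b ∈ Aᶜ, (y a - y b + α) / (y a - y b)) *
         ∏ i, (x i - y a + α) / (x i - y a)) := by
  classical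
  set P : Polynomial ℂ := ∑ I ∈ Finset.powersetCard r (Finset.univ : Finset (Fin n)),
    ∏ i ∈ I, ((∏ j ∈ Iᶜ, (Polynomial.C (x i - x j) - Polynomial.X) * Polynomial.C (x i - x j)⁻¹) *
      ∏ a, ((Polynomial.C (x i - y a) + Polynomial.X) * Polynomial.C (x i - y a)⁻¹)) with hP
  set Q : Polynomial ℂ := ∑ A ∈ Finset.powersetCard r (Finset.univ : Finset (Fin n)),
    ∏ a ∈ A, ((∏ b ∈ Aᶜ, (Polynomial.C (y a - y b) + Polynomial.X) * Polynomial.C (y a - y b)⁻¹) *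
      ∏ i, ((Polynomial.C (x i - y a) + Polynomial.X) * Polynomial.C (x i - y a)⁻¹)) with hQ
  have hevalP : ∀ β : ℂ, P.eval β
      = ∑ I ∈ Finset.powersetCard r (Finset.univ : Finset (Fin n)),
        ∏ i ∈ I, ((∏ j ∈ Iᶜ, (x i - x j - β) / (x i - x j)) *
          ∏ a, (x i - y a + β) / (x i - y a)) := by
    intro β
    rw [hP]
    simp only [Polynomial.eval_finset_sum, Polynomial.eval_prod, Polynomial.eval_mul,
      Polynomial.eval_sub, Polynomial.eval_add, Polynomial.eval_C, Polynomial.eval_X,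
      div_eq_mul_inv]
  have hevalQ : ∀ β : ℂ, Q.eval β
      = ∑ A ∈ Finset.powersetCard r (Finset.univ : Finset (Fin n)),
        ∏ a ∈ A, ((∏ b ∈ Aᶜ, (y a - y b + β) / (y a - y b)) *
          ∏ i, (x i - y a + β) / (x i - y a)) := by
    intro β
    rw [hQ]
    simp only [Polynomial.eval_finset_sum, Polynomial.eval_prod, Polynomial.eval_mul,
      Polynomial.eval_sub, Polynomial.eval_add, Polynomial.eval_C, Polynomial.eval_X,
      div_eq_mul_inv]
  have key : ∀ β : ℂ, β ∉ (Set.range fun p : Fin n × Fin n => y p.2 - x p.1) →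
      P.eval β = Q.eval β := by
    intro β hβ
    have hβ' : ∀ i a : Fin n, x i - y a + β ≠ 0 := by
      intro i a h0
      exact hβ ⟨(i, a), by rw [← sub_eq_zero]; rw [show y a - x i - β = -(x i - y a + β) by ring, h0, neg_zero]⟩
    rw [hevalP, hevalQ]
    exact KernelAux.main r hr hx hy hxy hβ'
  have hPQ : P = Q := by
    have hfin : (Set.range fun p : Fin n × Fin n => y p.2 - x p.1).Finite := Set.finite_range _
    have hsub : (Set.range fun p : Fin n × Fin n => y p.2 - x p.1)ᶜ ⊆ {β : ℂ | (P - Q).IsRoot β} := by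
      intro β hβ
      simp only [Set.mem_setOf_eq, Polynomial.IsRoot, Polynomial.eval_sub, sub_eq_zero]
      exact key β hβ
    have hinf : {β : ℂ | (P - Q).IsRoot β}.Infinite := (hfin.infinite_compl).mono hsub
    have h0 := Polynomial.eq_zero_of_infinite_isRoot _ hinf
    exact sub_eq_zero.1 h0
  rw [← hevalP α, ← hevalQ α, hPQ]
end

section
/- Let n ≥ 1 and K be natural numbers, p ∈ ℂ with 0 < |p| < 1, q, t ∈ ℂ∖{0}, and u_1,…,u_n, v_1,…,v_n nonzero complex numbers satisfying, both before and after the substitution below, the nonvanishing conditions θ(q^m; p) ≠ 0 for m ≥ 1, θ(q^m u_i/u_j; p) ≠ 0 (i ≠ j), θ(q^m v_a/v_b; p) ≠ 0 (a ≠ b), θ(q^m u_j/v_a; p) ≠ 0, for all m ∈ ℤ. Let W_K(u; v) denote the difference of the left- and right-hand sides of the elliptic duality identity, i.e. W_K(u;v) := ∑_{|k|=K} ∏_i (qt;p,q)_{k_i}/(q;p,q)_{k_i} ∏_{i≠j} (t^{−1}q^{−k_j}u_i/u_j;p,q)_{k_i}/(q^{−k_j}u_i/u_j;p,q)_{k_i}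 ∏_{a,j} (tu_j/v_a;p,q)_{k_j}/(u_j/v_a;p,q)_{k_j} − ∑_{|k|=K} ∏_a (qt;p,q)_{k_a}/(q;p,q)_{k_a} ∏_{a≠b} (t^{−1}q^{−k_a}v_a/v_b;p,q)_{k_b}/(q^{−k_a}v_a/v_b;p,q)_{k_b} ∏_{a,j} (tu_j/v_a;p,q)_{k_a}/(u_j/v_a;p,q)_{k_a}. Then W_K is quasiperiodic: for each index i, W_K(u_1,…,p·u_i,…,u_n; v) = t^{−K} · W_K(u_1,…,u_n; v), and W_K(u; v_1,…,p·v_i,…,v_n) = t^{K} · W_K(u; v_1,…,v_n). -/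
/-- The modified theta function
`θ(z;p) = ∏_{n ≥ 0} (1 − p^n z) ∏_{m > 0} (1 − p^m z⁻¹)`. -/
noncomputable def theta (z p : ℂ) : ℂ :=
  (∏' n : ℕ, (1 - p ^ n * z)) * (∏' m : ℕ, (1 - p ^ (m + 1) * z⁻¹))

/-- The elliptic Pochhammer symbol `(z; p,q)_k = ∏_{m=0}^{k-1} θ(q^m z; p)`. -/
noncomputable def ePoch (z p q : ℂ) (k : ℕ) : ℂ :=
  ∏ m ∈ Finset.range k, theta (q ^ m * z) p

/-- `W_K(u;v)`: the difference of the two sides of the elliptic duality identity. -/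
noncomputable def Wdiff (p q t : ℂ) {n : ℕ} (K : ℕ) (u v : Fin n → ℂ) : ℂ :=
  (∑ k ∈ Finset.Nat.antidiagonalTuple n K,
    ((∏ i, ePoch (q * t) p q (k i) / ePoch q p q (k i)) *
     (∏ i, ∏ j ∈ Finset.univ.filter (fun j => j ≠ i),
        ePoch (t⁻¹ * q ^ (-(k j : ℤ)) * (u i / u j)) p q (k i) /
          ePoch (q ^ (-(k j : ℤ)) * (u i / u j)) p q (k i)) *
     (∏ a, ∏ j, ePoch (t * u j / v a) p q (k j) / ePoch (u j / v a) p q (k j)))) -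
  (∑ k ∈ Finset.Nat.antidiagonalTuple n K,
    ((∏ a, ePoch (q * t) p q (k a) / ePoch q p q (k a)) *
     (∏ a, ∏ b ∈ Finset.univ.filter (fun b => b ≠ a),
        ePoch (t⁻¹ * q ^ (-(k a : ℤ)) * (v a / v b)) p q (k b) /
          ePoch (q ^ (-(k a : ℤ)) * (v a / v b)) p q (k b)) *
     (∏ a, ∏ j, ePoch (t * u j / v a) p q (k a) / ePoch (u j / v a) p q (k a))))

/-- The nonvanishing (genericity) conditions on the tuples `u`, `v`. -/
def NonVanishing (p q : ℂ) {n : ℕ} (u v : Fin n → ℂ) : Prop :=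
  (∀ i j : Fin n, i ≠ j → ∀ m : ℤ, theta (q ^ m * (u i / u j)) p ≠ 0) ∧
  (∀ a b : Fin n, a ≠ b → ∀ m : ℤ, theta (q ^ m * (v a / v b)) p ≠ 0) ∧
  (∀ j a : Fin n, ∀ m : ℤ, theta (q ^ m * (u j / v a)) p ≠ 0)

open Filter Finset Topology


private lemma mult_of_zero {f : ℕ → ℂ} (h : ∃ n, f n = 0) : Multipliable f := by
  obtain ⟨n₀, h0⟩ := h
  refine ⟨0, ?_⟩
  rw [HasProd]
  refine Filter.Tendsto.congr' ?_ tendsto_const_nhds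
  filter_upwards [Filter.eventually_ge_atTop ({n₀} : Finset ℕ)] with s hs
  exact (Finset.prod_eq_zero (hs (Finset.mem_singleton_self n₀)) h0).symm

private lemma mult_one_sub {p : ℂ} (hp1 : ‖p‖ < 1) (z : ℂ) :
    Multipliable (fun n : ℕ => 1 - p ^ n * z) := by
  by_cases h : ∃ n, 1 - p ^ n * z = 0
  · exact mult_of_zero h
  push_neg at h
  have hlog : Summable (fun n : ℕ => Complex.log (1 - p ^ n * z)) := by
    have hgeo : Summable (fun n : ℕ => (3/2 : ℝ) * (‖z‖ * ‖p‖ ^ n)) :=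
      ((summable_geometric_of_lt_one (norm_nonneg p) hp1).mul_left _).mul_left _
    refine hgeo.of_norm_bounded_eventually_nat ?_
    have htend : Tendsto (fun n : ℕ => ‖z‖ * ‖p‖ ^ n) atTop (𝓝 0) := by
      have h0 : Tendsto (fun n : ℕ => ‖p‖ ^ n) atTop (𝓝 0) :=
        tendsto_pow_atTop_nhds_zero_of_lt_one (norm_nonneg p) hp1
      simpa using h0.const_mul (‖z‖)
    filter_upwards [htend.eventually_le_const (by norm_num : (0:ℝ) < 1/2)] with n hn
    have h1 : ‖-(p ^ n * z)‖ ≤ 1/2 := by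
      rw [norm_neg, norm_mul, norm_pow]
      calc ‖p‖ ^ n * ‖z‖ = ‖z‖ * ‖p‖ ^ n := by ring
        _ ≤ 1/2 := hn
    have := Complex.norm_log_one_add_half_le_self h1
    rw [show (1 : ℂ) + -(p ^ n * z) = 1 - p ^ n * z by ring] at this
    refine this.trans ?_
    rw [norm_neg, norm_mul, norm_pow]
    nlinarith [norm_nonneg z, pow_nonneg (norm_nonneg p) n]
  exact Complex.multipliable_of_summable_log hlog

lemma theta_p_mul {p : ℂ} (hp0 : p ≠ 0) (hp1 : ‖p‖ < 1) {z : ℂ} (hz : z ≠ 0) :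
    theta (p * z) p = -z⁻¹ * theta z p := by
  unfold theta
  have hm1 : Multipliable (fun n : ℕ => 1 - p ^ (n + 1) * z) := by
    have := mult_one_sub hp1 (p * z)
    refine this.congr fun n => ?_
    rw [pow_succ]; ring
  have hm2 : Multipliable (fun m : ℕ => 1 - p ^ (m + 1) * z⁻¹) := by
    have := mult_one_sub hp1 (p * z⁻¹)
    refine this.congr fun n => ?_
    rw [pow_succ]; ring
  have e1 : (∏' n : ℕ, (1 - p ^ n * (p * z))) = ∏' n : ℕ, (1 - p ^ (n + 1) * z) :=
    tprod_congr fun n => by rw [pow_succ]; ring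
  have e2 : (∏' n : ℕ, (1 - p ^ n * z)) = (1 - z) * ∏' n : ℕ, (1 - p ^ (n + 1) * z) := by
    have := tprod_eq_zero_mul' (f := fun n : ℕ => 1 - p ^ n * z) hm1
    simpa using this
  have e3 : (∏' m : ℕ, (1 - p ^ (m + 1) * (p * z)⁻¹)) = ∏' m : ℕ, (1 - p ^ m * z⁻¹) :=
    tprod_congr fun m => by
      rw [show p ^ (m + 1) * (p * z)⁻¹ = p ^ m * z⁻¹ by
        field_simp [pow_succ]; ring]
  have e4 : (∏' m : ℕ, (1 - p ^ m * z⁻¹)) = (1 - z⁻¹) * ∏' m : ℕ, (1 - p ^ (m + 1) * z⁻¹) := by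
    have := tprod_eq_zero_mul' (f := fun m : ℕ => 1 - p ^ m * z⁻¹) hm2
    simpa using this
  rw [e1, e3, e4, e2]
  have hz1 : (1 - z⁻¹) = -z⁻¹ * (1 - z) := by
    field_simp
    ring
  rw [hz1]; ring
lemma ePoch_p_mul {p q : ℂ} (hp0 : p ≠ 0) (hp1 : ‖p‖ < 1) (hq : q ≠ 0)
    {z : ℂ} (hz : z ≠ 0) (k : ℕ) :
    ePoch (p * z) p q k
      = ((-1) ^ k * (∏ m ∈ Finset.range k, (q ^ m * z))⁻¹) * ePoch z p q k := by
  unfold ePoch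
  calc ∏ m ∈ Finset.range k, theta (q ^ m * (p * z)) p
      = ∏ m ∈ Finset.range k, ((-1) * (q ^ m * z)⁻¹ * theta (q ^ m * z) p) :=
        Finset.prod_congr rfl fun m _ => by
          rw [show q ^ m * (p * z) = p * (q ^ m * z) by ring,
            theta_p_mul hp0 hp1 (mul_ne_zero (pow_ne_zero _ hq) hz)]
          ring
    _ = _ := by
        rw [Finset.prod_mul_distrib, Finset.prod_mul_distrib, Finset.prod_const,
          Finset.card_range, ← Finset.prod_inv_distrib]

lemma ePoch_ratio_p {p q : ℂ} (hp0 : p ≠ 0) (hp1 : ‖p‖ < 1) (hq : q ≠ 0)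
    {c z : ℂ} (hc : c ≠ 0) (hz : z ≠ 0) (k : ℕ) :
    ePoch (p * (c * z)) p q k / ePoch (p * z) p q k
      = (c⁻¹) ^ k * (ePoch (c * z) p q k / ePoch z p q k) := by
  rw [ePoch_p_mul hp0 hp1 hq (mul_ne_zero hc hz) k, ePoch_p_mul hp0 hp1 hq hz k,
    mul_div_mul_comm]
  congr 1
  have hP : (∏ m ∈ Finset.range k, (q ^ m * z)) ≠ 0 :=
    Finset.prod_ne_zero_iff.mpr fun m _ => mul_ne_zero (pow_ne_zero _ hq) hz
  have hA : ∏ m ∈ Finset.range k, (q ^ m * (c * z))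
      = c ^ k * ∏ m ∈ Finset.range k, (q ^ m * z) := by
    calc ∏ m ∈ Finset.range k, (q ^ m * (c * z))
        = ∏ m ∈ Finset.range k, (c * (q ^ m * z)) :=
          Finset.prod_congr rfl fun m _ => by ring
      _ = _ := by rw [Finset.prod_mul_distrib, Finset.prod_const, Finset.card_range]
  have hX : ((-1 : ℂ) ^ k * (∏ m ∈ Finset.range k, (q ^ m * z))⁻¹) ≠ 0 :=
    mul_ne_zero (pow_ne_zero _ (by norm_num)) (inv_ne_zero hP)
  rw [hA, mul_inv, ← mul_assoc, mul_comm ((-1 : ℂ) ^ k) ((c ^ k)⁻¹), mul_assoc,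
    mul_div_assoc, div_self hX, mul_one, inv_pow]

lemma ePoch_ratio_pinv {p q : ℂ} (hp0 : p ≠ 0) (hp1 : ‖p‖ < 1) (hq : q ≠ 0)
    {c z : ℂ} (hc : c ≠ 0) (hz : z ≠ 0) (k : ℕ) :
    ePoch (p⁻¹ * (c * z)) p q k / ePoch (p⁻¹ * z) p q k
      = c ^ k * (ePoch (c * z) p q k / ePoch z p q k) := by
  have h := ePoch_ratio_p hp0 hp1 hq hc (z := p⁻¹ * z) (mul_ne_zero (inv_ne_zero hp0) hz) k
  rw [show p * (c * (p⁻¹ * z)) = c * z by field_simp,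
    show p * (p⁻¹ * z) = z by field_simp,
    show c * (p⁻¹ * z) = p⁻¹ * (c * z) by ring] at h
  rw [h, ← mul_assoc (c ^ k) (c⁻¹ ^ k), ← mul_pow, mul_inv_cancel₀ hc, one_pow, one_mul]
private lemma prodZpowSum {α : Type*} {t : ℂ} (ht : t ≠ 0) (s : Finset α) (f : α → ℤ) :
    ∏ a ∈ s, t ^ f a = t ^ (∑ a ∈ s, f a) := by
  classical
  induction s using Finset.induction_on with
  | empty => simp
  | insert a s h ih => rw [Finset.prod_insert h, Finset.sum_insert h, zpow_add₀ ht, ih]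

private lemma prod_transform {n : ℕ} {t : ℂ} (ht : t ≠ 0) (s : Fin n → Finset (Fin n))
    (F G : Fin n → Fin n → ℂ) (e : Fin n → Fin n → ℤ)
    (h : ∀ a, ∀ b ∈ s a, F a b = t ^ e a b * G a b) :
    ∏ a, ∏ b ∈ s a, F a b = t ^ (∑ a, ∑ b ∈ s a, e a b) * ∏ a, ∏ b ∈ s a, G a b := by
  calc ∏ a, ∏ b ∈ s a, F a b = ∏ a, ∏ b ∈ s a, (t ^ e a b * G a b) :=
        Finset.prod_congr rfl fun a _ => Finset.prod_congr rfl (h a)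
    _ = (∏ a, ∏ b ∈ s a, t ^ e a b) * ∏ a, ∏ b ∈ s a, G a b := by
        simp only [Finset.prod_mul_distrib]
    _ = _ := by
        congr 1
        calc ∏ a, ∏ b ∈ s a, t ^ e a b = ∏ a, t ^ (∑ b ∈ s a, e a b) :=
              Finset.prod_congr rfl fun a _ => prodZpowSum ht _ _
          _ = _ := prodZpowSum ht _ _

section terms
variable {p q t : ℂ} {n K : ℕ} {u v : Fin n → ℂ}

private lemma term_u1 (hp0 : p ≠ 0) (hp1 : ‖p‖ < 1) (hq : q ≠ 0) (ht : t ≠ 0)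
    (hu : ∀ i, u i ≠ 0) (hv : ∀ a, v a ≠ 0)
    (i : Fin n) (k : Fin n → ℕ) (hk : ∑ j, k j = K) :
    (∏ i', ePoch (q * t) p q (k i') / ePoch q p q (k i')) *
     (∏ i', ∏ j ∈ Finset.univ.filter (fun j => j ≠ i'),
        ePoch (t⁻¹ * q ^ (-(k j : ℤ)) * (Function.update u i (p * u i) i' /
            Function.update u i (p * u i) j)) p q (k i') /
          ePoch (q ^ (-(k j : ℤ)) * (Function.update u i (p * u i) i' /
            Function.update u i (p * u i) j)) p q (k i')) *
     (∏ a, ∏ j, ePoch (t * Function.update u i (p * u i) j / v a) p q (k j) /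
        ePoch (Function.update u i (p * u i) j / v a) p q (k j))
    = t ^ (-(K : ℤ)) *
      ((∏ i', ePoch (q * t) p q (k i') / ePoch q p q (k i')) *
       (∏ i', ∏ j ∈ Finset.univ.filter (fun j => j ≠ i'),
          ePoch (t⁻¹ * q ^ (-(k j : ℤ)) * (u i' / u j)) p q (k i') /
            ePoch (q ^ (-(k j : ℤ)) * (u i' / u j)) p q (k i')) *
       (∏ a, ∏ j, ePoch (t * u j / v a) p q (k j) / ePoch (u j / v a) p q (k j))) := by
  have hn : 1 ≤ n := i.pos
  set u' := Function.update u i (p * u i) with hu'def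
  have hu'i : u' i = p * u i := Function.update_self i (p * u i) u
  have hu'ne : ∀ j, j ≠ i → u' j = u j := fun j h => Function.update_of_ne h _ _
  -- transform B
  have hB := prod_transform (n := n) ht (fun i' => Finset.univ.filter (fun j => j ≠ i'))
    (fun i' j => ePoch (t⁻¹ * q ^ (-(k j : ℤ)) * (u' i' / u' j)) p q (k i') /
        ePoch (q ^ (-(k j : ℤ)) * (u' i' / u' j)) p q (k i'))
    (fun i' j => ePoch (t⁻¹ * q ^ (-(k j : ℤ)) * (u i' / u j)) p q (k i') /
        ePoch (q ^ (-(k j : ℤ)) * (u i' / u j)) p q (k i'))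
    (fun i' j => if i' = i then (k i : ℤ) else if j = i then -(k i' : ℤ) else 0)
    (by
      intro i' j hj
      rw [Finset.mem_filter] at hj
      have hj' : j ≠ i' := hj.2
      by_cases h1 : i' = i
      · have hji : j ≠ i := h1 ▸ hj'
        rw [h1, if_pos rfl, hu'i, hu'ne j hji]
        rw [show t⁻¹ * q ^ (-(k j : ℤ)) * (p * u i / u j)
              = p * (t⁻¹ * (q ^ (-(k j : ℤ)) * (u i / u j))) by ring,
          show q ^ (-(k j : ℤ)) * (p * u i / u j)
              = p * (q ^ (-(k j : ℤ)) * (u i / u j)) by ring,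
          ePoch_ratio_p hp0 hp1 hq (inv_ne_zero ht)
            (mul_ne_zero (zpow_ne_zero _ hq) (div_ne_zero (hu i) (hu j))) (k i),
          inv_inv, mul_assoc t⁻¹ (q ^ (-(k j : ℤ))) (u i / u j), zpow_natCast]
      · by_cases h2 : j = i
        · rw [h2, if_neg h1, if_pos rfl, hu'i, hu'ne i' h1]
          rw [show t⁻¹ * q ^ (-(k i : ℤ)) * (u i' / (p * u i))
                = p⁻¹ * (t⁻¹ * (q ^ (-(k i : ℤ)) * (u i' / u i))) by ring,
            show q ^ (-(k i : ℤ)) * (u i' / (p * u i))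
                = p⁻¹ * (q ^ (-(k i : ℤ)) * (u i' / u i)) by ring,
            ePoch_ratio_pinv hp0 hp1 hq (inv_ne_zero ht)
              (mul_ne_zero (zpow_ne_zero _ hq) (div_ne_zero (hu i') (hu i))) (k i'),
            mul_assoc t⁻¹ (q ^ (-(k i : ℤ))) (u i' / u i), inv_pow, zpow_neg, zpow_natCast,
            zpow_neg, zpow_natCast]
        · rw [if_neg h1, if_neg h2, hu'ne i' h1, hu'ne j h2, zpow_zero, one_mul])
  -- transform C
  have hC := prod_transform (n := n) ht (fun _ => Finset.univ)
    (fun a j => ePoch (t * u' j / v a) p q (k j) / ePoch (u' j / v a) p q (k j))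
    (fun a j => ePoch (t * u j / v a) p q (k j) / ePoch (u j / v a) p q (k j))
    (fun _ j => if j = i then -(k i : ℤ) else 0)
    (by
      intro a j _
      by_cases h2 : j = i
      · rw [h2, if_pos rfl, hu'i]
        rw [show t * (p * u i) / v a = p * (t * (u i / v a)) by ring,
          show p * u i / v a = p * (u i / v a) by ring,
          ePoch_ratio_p hp0 hp1 hq ht (div_ne_zero (hu i) (hv a)) (k i),
          mul_div_assoc t (u i) (v a), inv_pow, zpow_neg, zpow_natCast]
      · rw [if_neg h2, hu'ne j h2, zpow_zero, one_mul])
  rw [hB, hC]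
  -- compute the exponent sums
  have hfe : ∀ i' : Fin n, Finset.univ.filter (fun j => j ≠ i') = Finset.univ.erase i' :=
    fun i' => Finset.filter_ne' _ _
  have hKk : ∑ i' ∈ Finset.univ.erase i, (k i' : ℤ) = (K : ℤ) - k i := by
    have h2 : (k i : ℤ) + ∑ i' ∈ Finset.univ.erase i, (k i' : ℤ) = ∑ i' : Fin n, (k i' : ℤ) :=
      Finset.add_sum_erase _ (fun x => (k x : ℤ)) (Finset.mem_univ i)
    have h3 : ∑ i' : Fin n, (k i' : ℤ) = (K : ℤ) := by
      rw [← Nat.cast_sum, hk]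
    linarith
  have hS1 : (∑ i' : Fin n, ∑ j ∈ Finset.univ.filter (fun j => j ≠ i'),
      (if i' = i then (k i : ℤ) else if j = i then -(k i' : ℤ) else 0))
      = ((n : ℤ) - 1) * (k i) - ((K : ℤ) - (k i)) := by
    calc (∑ i' : Fin n, ∑ j ∈ Finset.univ.filter (fun j => j ≠ i'),
        (if i' = i then (k i : ℤ) else if j = i then -(k i' : ℤ) else 0))
        = ∑ i' : Fin n, (if i' = i then ((n : ℤ) - 1) * (k i) else -(k i' : ℤ)) := by
          refine Finset.sum_congr rfl fun i' _ => ?_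
          rw [hfe i']
          by_cases h : i' = i
          · subst h
            rw [if_pos rfl]
            rw [Finset.sum_congr rfl (fun j _ => if_pos rfl), Finset.sum_const,
              Finset.card_erase_of_mem (Finset.mem_univ _), Finset.card_univ, Fintype.card_fin,
              nsmul_eq_mul, Nat.cast_sub hn, Nat.cast_one]
          · rw [if_neg h]
            calc ∑ j ∈ Finset.univ.erase i', (if i' = i then (k i : ℤ)
                  else if j = i then -(k i' : ℤ) else 0)
                = ∑ j ∈ Finset.univ.erase i', (if j = i then -(k i' : ℤ) else 0) :=
                  Finset.sum_congr rfl fun j _ => by rw [if_neg h]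
              _ = -(k i' : ℤ) := by
                  rw [Finset.sum_ite_eq' (Finset.univ.erase i') i (fun _ => -(k i' : ℤ)),
                    if_pos (Finset.mem_erase.mpr ⟨Ne.symm h, Finset.mem_univ i⟩)]
      _ = ((n : ℤ) - 1) * (k i) + ∑ i' ∈ Finset.univ.erase i, -(k i' : ℤ) := by
          rw [← Finset.add_sum_erase _ _ (Finset.mem_univ i), if_pos rfl]
          congr 1
          exact Finset.sum_congr rfl fun j hj => if_neg (Finset.mem_erase.mp hj).1
      _ = _ := by rw [Finset.sum_neg_distrib, hKk]; ring
  have hS2 : (∑ a : Fin n, ∑ j : Fin n, (if j = i then -(k i : ℤ) else 0))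
      = -(n : ℤ) * (k i) := by
    rw [Finset.sum_congr rfl (fun a _ => by
      rw [Finset.sum_ite_eq' Finset.univ i (fun _ => -(k i : ℤ)), if_pos (Finset.mem_univ i)]),
      Finset.sum_const, Finset.card_univ, Fintype.card_fin, nsmul_eq_mul]
    ring
  rw [hS1, hS2]
  have key : t ^ (((n : ℤ) - 1) * (k i) - ((K : ℤ) - (k i))) * t ^ (-(n : ℤ) * (k i))
      = t ^ (-(K : ℤ)) := by
    rw [← zpow_add₀ ht]
    congr 1
    ring
  rw [← key]
  ring

end terms
section terms2
variable {p q t : ℂ} {n K : ℕ} {u v : Fin n → ℂ}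

private lemma term_u2 (hp0 : p ≠ 0) (hp1 : ‖p‖ < 1) (hq : q ≠ 0) (ht : t ≠ 0)
    (hu : ∀ i, u i ≠ 0) (hv : ∀ a, v a ≠ 0)
    (i : Fin n) (k : Fin n → ℕ) (hk : ∑ j, k j = K) :
    (∏ a, ePoch (q * t) p q (k a) / ePoch q p q (k a)) *
     (∏ a, ∏ b ∈ Finset.univ.filter (fun b => b ≠ a),
        ePoch (t⁻¹ * q ^ (-(k a : ℤ)) * (v a / v b)) p q (k b) /
          ePoch (q ^ (-(k a : ℤ)) * (v a / v b)) p q (k b)) *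
     (∏ a, ∏ j, ePoch (t * Function.update u i (p * u i) j / v a) p q (k a) /
        ePoch (Function.update u i (p * u i) j / v a) p q (k a))
    = t ^ (-(K : ℤ)) *
      ((∏ a, ePoch (q * t) p q (k a) / ePoch q p q (k a)) *
       (∏ a, ∏ b ∈ Finset.univ.filter (fun b => b ≠ a),
          ePoch (t⁻¹ * q ^ (-(k a : ℤ)) * (v a / v b)) p q (k b) /
            ePoch (q ^ (-(k a : ℤ)) * (v a / v b)) p q (k b)) *
       (∏ a, ∏ j, ePoch (t * u j / v a) p q (k a) / ePoch (u j / v a) p q (k a))) := by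
  set u' := Function.update u i (p * u i) with hu'def
  have hu'i : u' i = p * u i := Function.update_self i (p * u i) u
  have hu'ne : ∀ j, j ≠ i → u' j = u j := fun j h => Function.update_of_ne h _ _
  have hC := prod_transform (n := n) ht (fun _ => Finset.univ)
    (fun a j => ePoch (t * u' j / v a) p q (k a) / ePoch (u' j / v a) p q (k a))
    (fun a j => ePoch (t * u j / v a) p q (k a) / ePoch (u j / v a) p q (k a))
    (fun a j => if j = i then -(k a : ℤ) else 0)
    (by
      intro a j _
      by_cases h2 : j = i
      · rw [h2, if_pos rfl, hu'i]
        rw [show t * (p * u i) / v a = p * (t * (u i / v a)) by ring,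
          show p * u i / v a = p * (u i / v a) by ring,
          ePoch_ratio_p hp0 hp1 hq ht (div_ne_zero (hu i) (hv a)) (k a),
          mul_div_assoc t (u i) (v a), inv_pow, zpow_neg, zpow_natCast]
      · rw [if_neg h2, hu'ne j h2, zpow_zero, one_mul])
  rw [hC]
  have hS : (∑ a : Fin n, ∑ j : Fin n, (if j = i then -(k a : ℤ) else 0)) = -(K : ℤ) := by
    rw [Finset.sum_congr rfl (fun a _ => by
      rw [Finset.sum_ite_eq' Finset.univ i (fun _ => -(k a : ℤ)), if_pos (Finset.mem_univ i)]),
      Finset.sum_neg_distrib, ← Nat.cast_sum, hk]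
  rw [hS]
  ring

private lemma term_v1 (hp0 : p ≠ 0) (hp1 : ‖p‖ < 1) (hq : q ≠ 0) (ht : t ≠ 0)
    (hu : ∀ i, u i ≠ 0) (hv : ∀ a, v a ≠ 0)
    (i : Fin n) (k : Fin n → ℕ) (hk : ∑ j, k j = K) :
    (∏ i', ePoch (q * t) p q (k i') / ePoch q p q (k i')) *
     (∏ i', ∏ j ∈ Finset.univ.filter (fun j => j ≠ i'),
        ePoch (t⁻¹ * q ^ (-(k j : ℤ)) * (u i' / u j)) p q (k i') /
          ePoch (q ^ (-(k j : ℤ)) * (u i' / u j)) p q (k i')) *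
     (∏ a, ∏ j, ePoch (t * u j / Function.update v i (p * v i) a) p q (k j) /
        ePoch (u j / Function.update v i (p * v i) a) p q (k j))
    = t ^ (K : ℤ) *
      ((∏ i', ePoch (q * t) p q (k i') / ePoch q p q (k i')) *
       (∏ i', ∏ j ∈ Finset.univ.filter (fun j => j ≠ i'),
          ePoch (t⁻¹ * q ^ (-(k j : ℤ)) * (u i' / u j)) p q (k i') /
            ePoch (q ^ (-(k j : ℤ)) * (u i' / u j)) p q (k i')) *
       (∏ a, ∏ j, ePoch (t * u j / v a) p q (k j) / ePoch (u j / v a) p q (k j))) := by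
  set v' := Function.update v i (p * v i) with hv'def
  have hv'i : v' i = p * v i := Function.update_self i (p * v i) v
  have hv'ne : ∀ a, a ≠ i → v' a = v a := fun a h => Function.update_of_ne h _ _
  have hC := prod_transform (n := n) ht (fun _ => Finset.univ)
    (fun a j => ePoch (t * u j / v' a) p q (k j) / ePoch (u j / v' a) p q (k j))
    (fun a j => ePoch (t * u j / v a) p q (k j) / ePoch (u j / v a) p q (k j))
    (fun a j => if a = i then (k j : ℤ) else 0)
    (by
      intro a j _
      by_cases h2 : a = i
      · rw [h2, if_pos rfl, hv'i]
        rw [show t * u j / (p * v i) = p⁻¹ * (t * (u j / v i)) by ring,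
          show u j / (p * v i) = p⁻¹ * (u j / v i) by ring,
          ePoch_ratio_pinv hp0 hp1 hq ht (div_ne_zero (hu j) (hv i)) (k j),
          mul_div_assoc t (u j) (v i), zpow_natCast]
      · rw [if_neg h2, hv'ne a h2, zpow_zero, one_mul])
  rw [hC]
  have hS : (∑ a : Fin n, ∑ j : Fin n, (if a = i then (k j : ℤ) else 0)) = (K : ℤ) := by
    have inner : ∀ a : Fin n, (∑ j : Fin n, (if a = i then (k j : ℤ) else 0))
        = if a = i then (K : ℤ) else 0 := by
      intro a
      by_cases h : a = i
      · rw [if_pos h, Finset.sum_congr rfl (fun j _ => if_pos h), ← Nat.cast_sum, hk]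
      · simp [h]
    rw [Finset.sum_congr rfl (fun a _ => inner a),
      Finset.sum_ite_eq' Finset.univ i (fun _ => (K : ℤ)), if_pos (Finset.mem_univ i)]
  rw [hS]
  ring

private lemma term_v2 (hp0 : p ≠ 0) (hp1 : ‖p‖ < 1) (hq : q ≠ 0) (ht : t ≠ 0)
    (hu : ∀ i, u i ≠ 0) (hv : ∀ a, v a ≠ 0)
    (i : Fin n) (k : Fin n → ℕ) (hk : ∑ j, k j = K) :
    (∏ a, ePoch (q * t) p q (k a) / ePoch q p q (k a)) *
     (∏ a, ∏ b ∈ Finset.univ.filter (fun b => b ≠ a),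
        ePoch (t⁻¹ * q ^ (-(k a : ℤ)) * (Function.update v i (p * v i) a /
            Function.update v i (p * v i) b)) p q (k b) /
          ePoch (q ^ (-(k a : ℤ)) * (Function.update v i (p * v i) a /
            Function.update v i (p * v i) b)) p q (k b)) *
     (∏ a, ∏ j, ePoch (t * u j / Function.update v i (p * v i) a) p q (k a) /
        ePoch (u j / Function.update v i (p * v i) a) p q (k a))
    = t ^ (K : ℤ) *
      ((∏ a, ePoch (q * t) p q (k a) / ePoch q p q (k a)) *
       (∏ a, ∏ b ∈ Finset.univ.filter (fun b => b ≠ a),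
          ePoch (t⁻¹ * q ^ (-(k a : ℤ)) * (v a / v b)) p q (k b) /
            ePoch (q ^ (-(k a : ℤ)) * (v a / v b)) p q (k b)) *
       (∏ a, ∏ j, ePoch (t * u j / v a) p q (k a) / ePoch (u j / v a) p q (k a))) := by
  have hn : 1 ≤ n := i.pos
  set v' := Function.update v i (p * v i) with hv'def
  have hv'i : v' i = p * v i := Function.update_self i (p * v i) v
  have hv'ne : ∀ a, a ≠ i → v' a = v a := fun a h => Function.update_of_ne h _ _
  have hB := prod_transform (n := n) ht (fun a => Finset.univ.filter (fun b => b ≠ a))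
    (fun a b => ePoch (t⁻¹ * q ^ (-(k a : ℤ)) * (v' a / v' b)) p q (k b) /
        ePoch (q ^ (-(k a : ℤ)) * (v' a / v' b)) p q (k b))
    (fun a b => ePoch (t⁻¹ * q ^ (-(k a : ℤ)) * (v a / v b)) p q (k b) /
        ePoch (q ^ (-(k a : ℤ)) * (v a / v b)) p q (k b))
    (fun a b => if a = i then (k b : ℤ) else if b = i then -(k i : ℤ) else 0)
    (by
      intro a b hb
      rw [Finset.mem_filter] at hb
      have hb' : b ≠ a := hb.2
      by_cases h1 : a = i
      · have hbi : b ≠ i := h1 ▸ hb'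
        rw [h1, if_pos rfl, hv'i, hv'ne b hbi]
        rw [show t⁻¹ * q ^ (-(k i : ℤ)) * (p * v i / v b)
              = p * (t⁻¹ * (q ^ (-(k i : ℤ)) * (v i / v b))) by ring,
          show q ^ (-(k i : ℤ)) * (p * v i / v b)
              = p * (q ^ (-(k i : ℤ)) * (v i / v b)) by ring,
          ePoch_ratio_p hp0 hp1 hq (inv_ne_zero ht)
            (mul_ne_zero (zpow_ne_zero _ hq) (div_ne_zero (hv i) (hv b))) (k b),
          inv_inv, mul_assoc t⁻¹ (q ^ (-(k i : ℤ))) (v i / v b), zpow_natCast]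
      · by_cases h2 : b = i
        · rw [h2, if_neg h1, if_pos rfl, hv'i, hv'ne a h1]
          rw [show t⁻¹ * q ^ (-(k a : ℤ)) * (v a / (p * v i))
                = p⁻¹ * (t⁻¹ * (q ^ (-(k a : ℤ)) * (v a / v i))) by ring,
            show q ^ (-(k a : ℤ)) * (v a / (p * v i))
                = p⁻¹ * (q ^ (-(k a : ℤ)) * (v a / v i)) by ring,
            ePoch_ratio_pinv hp0 hp1 hq (inv_ne_zero ht)
              (mul_ne_zero (zpow_ne_zero _ hq) (div_ne_zero (hv a) (hv i))) (k i),
            mul_assoc t⁻¹ (q ^ (-(k a : ℤ))) (v a / v i), inv_pow, zpow_neg, zpow_natCast,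
            zpow_neg, zpow_natCast]
        · rw [if_neg h1, if_neg h2, hv'ne a h1, hv'ne b h2, zpow_zero, one_mul])
  have hC := prod_transform (n := n) ht (fun _ => Finset.univ)
    (fun a j => ePoch (t * u j / v' a) p q (k a) / ePoch (u j / v' a) p q (k a))
    (fun a j => ePoch (t * u j / v a) p q (k a) / ePoch (u j / v a) p q (k a))
    (fun a j => if a = i then (k i : ℤ) else 0)
    (by
      intro a j _
      by_cases h2 : a = i
      · rw [h2, if_pos rfl, hv'i]
        rw [show t * u j / (p * v i) = p⁻¹ * (t * (u j / v i)) by ring,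
          show u j / (p * v i) = p⁻¹ * (u j / v i) by ring,
          ePoch_ratio_pinv hp0 hp1 hq ht (div_ne_zero (hu j) (hv i)) (k i),
          mul_div_assoc t (u j) (v i), zpow_natCast]
      · rw [if_neg h2, hv'ne a h2, zpow_zero, one_mul])
  rw [hB, hC]
  have hfe : ∀ a : Fin n, Finset.univ.filter (fun b => b ≠ a) = Finset.univ.erase a :=
    fun a => Finset.filter_ne' _ _
  have hKk : ∑ b ∈ Finset.univ.erase i, (k b : ℤ) = (K : ℤ) - k i := by
    have h2 : (k i : ℤ) + ∑ b ∈ Finset.univ.erase i, (k b : ℤ) = ∑ b : Fin n, (k b : ℤ) :=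
      Finset.add_sum_erase _ (fun x => (k x : ℤ)) (Finset.mem_univ i)
    have h3 : ∑ b : Fin n, (k b : ℤ) = (K : ℤ) := by rw [← Nat.cast_sum, hk]
    linarith
  have hSB : (∑ a : Fin n, ∑ b ∈ Finset.univ.filter (fun b => b ≠ a),
      (if a = i then (k b : ℤ) else if b = i then -(k i : ℤ) else 0))
      = ((K : ℤ) - (k i)) - ((n : ℤ) - 1) * (k i) := by
    calc (∑ a : Fin n, ∑ b ∈ Finset.univ.filter (fun b => b ≠ a),
        (if a = i then (k b : ℤ) else if b = i then -(k i : ℤ) else 0))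
        = ∑ a : Fin n, (if a = i then (K : ℤ) - (k i) else -(k i : ℤ)) := by
          refine Finset.sum_congr rfl fun a _ => ?_
          rw [hfe a]
          by_cases h : a = i
          · subst h
            rw [if_pos rfl, Finset.sum_congr rfl (fun b _ => if_pos rfl), hKk]
          · rw [if_neg h]
            calc ∑ b ∈ Finset.univ.erase a, (if a = i then (k b : ℤ)
                  else if b = i then -(k i : ℤ) else 0)
                = ∑ b ∈ Finset.univ.erase a, (if b = i then -(k i : ℤ) else 0) :=
                  Finset.sum_congr rfl fun b _ => by rw [if_neg h]
              _ = -(k i : ℤ) := by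
                  rw [Finset.sum_ite_eq' (Finset.univ.erase a) i (fun _ => -(k i : ℤ)),
                    if_pos (Finset.mem_erase.mpr ⟨Ne.symm h, Finset.mem_univ i⟩)]
      _ = ((K : ℤ) - (k i)) + ∑ a ∈ Finset.univ.erase i, -(k i : ℤ) := by
          rw [← Finset.add_sum_erase _ _ (Finset.mem_univ i), if_pos rfl]
          congr 1
          exact Finset.sum_congr rfl fun a ha => if_neg (Finset.mem_erase.mp ha).1
      _ = _ := by
          rw [Finset.sum_const, Finset.card_erase_of_mem (Finset.mem_univ _), Finset.card_univ,
            Fintype.card_fin, nsmul_eq_mul, Nat.cast_sub hn, Nat.cast_one]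
          ring
  have hSC : (∑ a : Fin n, ∑ _j : Fin n, (if a = i then (k i : ℤ) else 0))
      = (n : ℤ) * (k i) := by
    have inner : ∀ a : Fin n, (∑ _j : Fin n, (if a = i then (k i : ℤ) else 0))
        = if a = i then (n : ℤ) * (k i) else 0 := by
      intro a
      by_cases h : a = i
      · rw [if_pos h, if_pos h, Finset.sum_const, Finset.card_univ, Fintype.card_fin,
          nsmul_eq_mul]
      · simp [h]
    rw [Finset.sum_congr rfl (fun a _ => inner a),
      Finset.sum_ite_eq' Finset.univ i (fun _ => (n : ℤ) * (k i)), if_pos (Finset.mem_univ i)]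
  rw [hSB, hSC]
  have key : t ^ (((K : ℤ) - (k i)) - ((n : ℤ) - 1) * (k i)) * t ^ ((n : ℤ) * (k i))
      = t ^ (K : ℤ) := by
    rw [← zpow_add₀ ht]
    congr 1
    ring
  rw [← key]
  ring

end terms2

/-- Quasiperiodicity of `W_K`: replacing `u_i` by `p·u_i` multiplies `W_K` by
`t^{-K}`, and replacing `v_i` by `p·v_i` multiplies `W_K` by `t^{K}`. -/
theorem W_quasiperiodicity (n K : ℕ) (hn : 1 ≤ n)
    (p q t : ℂ) (hp0 : p ≠ 0) (hp1 : ‖p‖ < 1)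
    (hq : q ≠ 0) (ht : t ≠ 0)
    (u v : Fin n → ℂ) (hu : ∀ i, u i ≠ 0) (hv : ∀ a, v a ≠ 0)
    (hθq : ∀ m : ℕ, 1 ≤ m → theta (q ^ m) p ≠ 0)
    (hgen : NonVanishing p q u v)
    (hgenu : ∀ i : Fin n, NonVanishing p q (Function.update u i (p * u i)) v)
    (hgenv : ∀ i : Fin n, NonVanishing p q u (Function.update v i (p * v i))) :
    ∀ i : Fin n,
      Wdiff p q t K (Function.update u i (p * u i)) v
          = t ^ (-(K : ℤ)) * Wdiff p q t K u v ∧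
      Wdiff p q t K u (Function.update v i (p * v i))
          = t ^ (K : ℤ) * Wdiff p q t K u v := by
  intro i
  constructor
  · unfold Wdiff
    rw [mul_sub, Finset.mul_sum, Finset.mul_sum]
    congr 1
    · exact Finset.sum_congr rfl fun k hk =>
        term_u1 hp0 hp1 hq ht hu hv i k (Finset.Nat.mem_antidiagonalTuple.mp hk)
    · exact Finset.sum_congr rfl fun k hk =>
        term_u2 hp0 hp1 hq ht hu hv i k (Finset.Nat.mem_antidiagonalTuple.mp hk)
  · unfold Wdiff
    rw [mul_sub, Finset.mul_sum, Finset.mul_sum]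
    congr 1
    · exact Finset.sum_congr rfl fun k hk =>
        term_v1 hp0 hp1 hq ht hu hv i k (Finset.Nat.mem_antidiagonalTuple.mp hk)
    · exact Finset.sum_congr rfl fun k hk =>
        term_v2 hp0 hp1 hq ht hu hv i k (Finset.Nat.mem_antidiagonalTuple.mp hk)
end
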